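/- arXiv:1910.13633 — 7 statements merged into one kernel-verified Lean document; each statement's English description precedes it below -/
import Mathlib

section
/- Necessity (Theorem 1, 'only if' direction; Lemma A.2): In any disclosure game, if (σ, a, μ) is a truth-leaning equilibrium, then the sender's value function V satisfies the Theorem-1 conditions: (1) V is non-decreasing from (E, ≼) to (ℝ, ≤); (2) ξ(V⁻¹(x)) = x for every x in the range of V; (3) ξ(L) ≥ x for every x in the range of V and every lower contour set L in V⁻¹(x). -/
open scoped BigOperators

universe u

/-- A disclosure game: a countable evidence space `E` with a disclosure rule
(a preorder `r`, where `r m e` means message `m` is feasible for endowment `e`)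
satisfying the lower-bound condition (A4′), a prior `π0 ∈ (0,1)`, evidence
distributions `FG`, `FB` in each state, and a strictly increasing receiver
response `φ` on `[0,1]`. -/
structure DGame (E : Type u) where
  r : E → E → Prop
  r_refl : ∀ e, r e e
  r_trans : ∀ {a b c : E}, r a b → r b c → r a c
  a4 : ∀ f : ℕ → E, (∀ n, r (f (n + 1)) (f n)) → ∃ N, ∀ n ≥ N, r (f N) (f n)
  π0 : ℝ
  π0_pos : 0 < π0
  π0_lt_one : π0 < 1
  FG : E → ℝ
  FB : E → ℝ
  FG_nonneg : ∀ e, 0 ≤ FG e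
  FB_nonneg : ∀ e, 0 ≤ FB e
  FG_hasSum : HasSum FG 1
  FB_hasSum : HasSum FB 1
  FGB_pos : ∀ e, 0 < FG e + FB e
  φ : ℝ → ℝ
  φ_mono : StrictMonoOn φ (Set.Icc (0 : ℝ) 1)

namespace DGame

variable {E : Type u} (G : DGame E)

/-- The posterior belief `ν(A)` that the state is good conditional on the
evidence lying in `A`. -/
noncomputable def nu (A : Set E) : ℝ :=
  ((∑' e : A, G.FG e) * G.π0) /
    ((∑' e : A, G.FG e) * G.π0 + (∑' e : A, G.FB e) * (1 - G.π0))

/-- `ξ(A) = φ(ν(A))`. -/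
noncomputable def xi (A : Set E) : ℝ := G.φ (G.nu A)

/-- `L` is a (nonempty) lower contour set in `A`. -/
def IsLCS (A L : Set E) : Prop :=
  L.Nonempty ∧ L ⊆ A ∧ ∀ e ∈ L, ∀ e' ∈ A, G.r e' e → e' ∈ L

/-- The Theorem-1 conditions on a candidate value function `V`. -/
def Thm1Conds (V : E → ℝ) : Prop :=
  (∀ e e', G.r e e' → V e ≤ V e') ∧
  (∀ x ∈ Set.range V, G.xi (V ⁻¹' {x}) = x) ∧
  (∀ x ∈ Set.range V, ∀ L : Set E, G.IsLCS (V ⁻¹' {x}) L → x ≤ G.xi L)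

/-- A truth-leaning equilibrium `(σ, act, μ)` of the disclosure game. -/
structure Eqm where
  σ : E → E → ℝ
  act : E → ℝ
  μ : E → ℝ
  σ_nonneg : ∀ e m, 0 ≤ σ e m
  σ_hasSum : ∀ e, HasSum (σ e) 1
  feasible : ∀ e m, 0 < σ e m → G.r m e
  μ_mem : ∀ m, μ m ∈ Set.Icc (0 : ℝ) 1
  sender_opt : ∀ e m, 0 < σ e m → ∀ m', G.r m' e → act m' ≤ act m
  receiver_opt : ∀ m, act m = G.φ (μ m)
  bayes : ∀ m, (∃ e, 0 < σ e m) →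
    μ m = (∑' e : {e : E // G.r m e}, σ e.1 m * G.FG e.1 * G.π0) /
      (∑' e : {e : E // G.r m e}, σ e.1 m * (G.FG e.1 * G.π0 + G.FB e.1 * (1 - G.π0)))
  truth_leaning : ∀ e, (∀ m, G.r m e → act m ≤ act e) → σ e e = 1
  offpath : ∀ m, (¬ ∃ e, 0 < σ e m) → μ m = G.nu {m}

/-- `V` is the sender's value function of the equilibrium `Q`. -/
def IsValueFn (Q : G.Eqm) (V : E → ℝ) : Prop :=
  ∀ e m, 0 < Q.σ e m → V e = Q.act m

end DGame

section TLNec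

open Set

variable {E : Type u} {G : DGame E} {Q : G.Eqm} {V : E → ℝ}

private lemma sigma_le_one (Q : G.Eqm) (e m : E) : Q.σ e m ≤ 1 :=
  le_hasSum (Q.σ_hasSum e) m (fun j _ => Q.σ_nonneg e j)

private lemma exists_msg (Q : G.Eqm) (e : E) : ∃ m, 0 < Q.σ e m := by
  by_contra hx
  push_neg at hx
  have h0 : Q.σ e = fun _ => 0 :=
    funext fun m => le_antisymm (hx m) (Q.σ_nonneg e m)
  have h1 := Q.σ_hasSum e
  rw [h0] at h1
  exact one_ne_zero (h1.unique hasSum_zero)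

private lemma act_le_V (hV : G.IsValueFn Q V) {e m : E} (h : G.r m e) :
    Q.act m ≤ V e := by
  obtain ⟨m0, hm0⟩ := exists_msg Q e
  rw [hV e m0 hm0]
  exact Q.sender_opt e m0 hm0 m h

private lemma act_self_le (hV : G.IsValueFn Q V) (e : E) : Q.act e ≤ V e :=
  act_le_V hV (G.r_refl e)

private lemma V_mono (hV : G.IsValueFn Q V) {e e' : E} (h : G.r e e') :
    V e ≤ V e' := by
  obtain ⟨m0, hm0⟩ := exists_msg Q e
  rw [hV e m0 hm0]
  exact act_le_V hV (G.r_trans (Q.feasible e m0 hm0) h)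

private lemma sigma_self (hV : G.IsValueFn Q V) {e : E} (h : Q.act e = V e) :
    Q.σ e e = 1 :=
  Q.truth_leaning e fun m hm => (act_le_V hV hm).trans_eq h.symm

private lemma sigma_other_zero {e m : E} (h : Q.σ e e = 1) (hm : m ≠ e) :
    Q.σ e m = 0 := by
  classical
  have hsum := sum_le_hasSum {e, m} (fun i _ => Q.σ_nonneg e i) (Q.σ_hasSum e)
  rw [Finset.sum_pair (Ne.symm hm)] at hsum
  have := Q.σ_nonneg e m
  linarith

private lemma act_eq_of_onpath (hV : G.IsValueFn Q V) {e : E}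
    (h : ∃ e', 0 < Q.σ e' e) : Q.act e = V e := by
  obtain ⟨e', he'⟩ := h
  have h1 : V e' = Q.act e := hV e' e he'
  have h2 : V e ≤ V e' := V_mono hV (Q.feasible e' e he')
  exact le_antisymm (act_self_le hV e) (h1 ▸ h2)

private lemma totpos (G : DGame E) (e : E) :
    0 < G.FG e * G.π0 + G.FB e * (1 - G.π0) := by
  have hπ1 : (0:ℝ) < 1 - G.π0 := by linarith [G.π0_lt_one]
  rcases lt_or_eq_of_le (G.FG_nonneg e) with h1 | h1
  · have h2 : 0 < G.FG e * G.π0 := mul_pos h1 G.π0_pos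
    have h3 : 0 ≤ G.FB e * (1 - G.π0) := mul_nonneg (G.FB_nonneg e) hπ1.le
    linarith
  · have hb : 0 < G.FB e := by have := G.FGB_pos e; linarith
    have h2 : 0 < G.FB e * (1 - G.π0) := mul_pos hb hπ1
    have h3 : 0 ≤ G.FG e * G.π0 := mul_nonneg (G.FG_nonneg e) G.π0_pos.le
    linarith

private lemma nu_singleton (G : DGame E) (e : E) :
    G.nu {e} = (G.FG e * G.π0) / (G.FG e * G.π0 + G.FB e * (1 - G.π0)) := by
  simp [DGame.nu, tsum_singleton]

private lemma nu_mem (G : DGame E) (A : Set E) : G.nu A ∈ Set.Icc (0:ℝ) 1 := by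
  have hπ1 : (0:ℝ) ≤ 1 - G.π0 := by linarith [G.π0_lt_one]
  have ha : 0 ≤ (∑' e : A, G.FG e) * G.π0 :=
    mul_nonneg (tsum_nonneg fun e => G.FG_nonneg e) G.π0_pos.le
  have hb : 0 ≤ (∑' e : A, G.FB e) * (1 - G.π0) :=
    mul_nonneg (tsum_nonneg fun e => G.FB_nonneg e) hπ1
  unfold DGame.nu
  rcases eq_or_lt_of_le (add_nonneg ha hb) with h | h
  · rw [← h]
    simp
  · exact ⟨div_nonneg ha (by linarith), (div_le_one h).mpr (by linarith)⟩

private lemma type_bound (hV : G.IsValueFn Q V) {e : E} {c x : ℝ}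
    (hc : c ∈ Set.Icc (0:ℝ) 1) (hφc : G.φ c = x)
    (hlt : Q.act e < V e) (hVe : V e = x) :
    G.FG e * G.π0 ≤ c * (G.FG e * G.π0 + G.FB e * (1 - G.π0)) := by
  have hoff : ¬ ∃ e', 0 < Q.σ e' e := by
    intro h
    exact absurd (act_eq_of_onpath hV h) hlt.ne
  have hμ : Q.μ e = G.nu {e} := Q.offpath e hoff
  have hact : Q.act e = G.φ (G.nu {e}) := by rw [Q.receiver_opt e, hμ]
  have hν : G.nu {e} ∈ Set.Icc (0:ℝ) 1 := nu_mem G {e}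
  have hle : G.nu {e} ≤ c := by
    by_contra h
    push_neg at h
    have := G.φ_mono hc hν h
    rw [hφc, ← hact] at this
    linarith [hlt.trans_eq hVe]
  rw [nu_singleton] at hle
  exact (div_le_iff₀ (totpos G e)).mp hle

private lemma fubini (Q : G.Eqm) {L T : Set E}
    (hsupp : ∀ e ∈ L, ∀ m, 0 < Q.σ e m → m ∈ T)
    {w : E → ℝ} (hw : ∀ e, 0 ≤ w e) (hws : Summable w) :
    Summable (fun m : T => ∑' e : L, Q.σ e m * w e) ∧
      (∑' (m : T) (e : L), Q.σ e m * w e) = ∑' e : L, w e := by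
  set f : ↥L × ↥T → ℝ := fun p => Q.σ p.1 p.2 * w p.1 with hf
  have hf0 : 0 ≤ f := fun p => mul_nonneg (Q.σ_nonneg _ _) (hw _)
  have hinner : ∀ e : ↥L, Summable fun m : ↥T => f (e, m) :=
    fun e => (((Q.σ_hasSum e).summable).subtype T).mul_right (w e)
  have hinnersum : ∀ e : ↥L, (∑' m : ↥T, f (e, m)) = w e := by
    intro e
    have hsub : Function.support (Q.σ e) ⊆ T := by
      intro m hm
      exact hsupp e e.2 m (lt_of_le_of_ne (Q.σ_nonneg e m) (Ne.symm hm))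
    calc (∑' m : ↥T, f (e, m)) = (∑' m : ↥T, Q.σ e m * w e) := rfl
      _ = (∑' m : ↥T, Q.σ e m) * w e := tsum_mul_right
      _ = (∑' m, Q.σ e m) * w e := by rw [tsum_subtype_eq_of_support_subset hsub]
      _ = w e := by rw [(Q.σ_hasSum e).tsum_eq, one_mul]
  have hmarg : Summable fun e : ↥L => ∑' m : ↥T, f (e, m) := by
    apply Summable.congr (hws.subtype L)
    intro e
    exact (hinnersum e).symm
  have hfs : Summable f := (summable_prod_of_nonneg hf0).2 ⟨hinner, hmarg⟩
  have hgs : Summable fun p : ↥T × ↥L => f p.swap := hfs.prod_symm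
  have hg0 : 0 ≤ fun p : ↥T × ↥L => f p.swap := fun p => hf0 _
  have hKey := (summable_prod_of_nonneg hg0).1 hgs
  refine ⟨hKey.2, ?_⟩
  have h1 : (∑' (m : ↥T) (e : ↥L), f (e, m)) = ∑' p : ↥T × ↥L, f p.swap :=
    (Summable.tsum_prod' hgs hKey.1).symm
  have h2 : (∑' p : ↥T × ↥L, f p.swap) = ∑' p : ↥L × ↥T, f p :=
    (Equiv.prodComm ↥T ↥L).tsum_eq f
  have h3 : (∑' p : ↥L × ↥T, f p) = ∑' (e : ↥L) (m : ↥T), f (e, m) :=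
    Summable.tsum_prod' hfs hinner
  calc (∑' (m : ↥T) (e : ↥L), Q.σ e m * w e)
      = ∑' p : ↥T × ↥L, f p.swap := h1
    _ = ∑' p : ↥L × ↥T, f p := h2
    _ = ∑' (e : ↥L) (m : ↥T), f (e, m) := h3
    _ = ∑' e : ↥L, w e := tsum_congr hinnersum

end TLNec

section TLMain

variable {E : Type u} {G : DGame E} {Q : G.Eqm} {V : E → ℝ}

private lemma main_ineq (hV : G.IsValueFn Q V) {x : ℝ} {L : Set E}
    (hL : G.IsLCS (V ⁻¹' {x}) L) :
    ∃ c ∈ Set.Icc (0:ℝ) 1, G.φ c = x ∧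
      c * ((∑' e : L, G.FG e) * G.π0 + (∑' e : L, G.FB e) * (1 - G.π0)) ≤
        (∑' e : L, G.FG e) * G.π0 ∧
      (L = V ⁻¹' {x} →
        c * ((∑' e : L, G.FG e) * G.π0 + (∑' e : L, G.FB e) * (1 - G.π0)) =
          (∑' e : L, G.FG e) * G.π0) := by
  obtain ⟨⟨eL, heL⟩, hLW, hlcs⟩ := hL
  have heLx : V eL = x := hLW heL
  obtain ⟨m0, hm0⟩ := exists_msg Q eL
  set c := Q.μ m0 with hcdef
  have hc : c ∈ Set.Icc (0:ℝ) 1 := Q.μ_mem m0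
  have hact0 : Q.act m0 = x := by rw [← hV eL m0 hm0]; exact heLx
  have hφc : G.φ c = x := by rw [← Q.receiver_opt m0]; exact hact0
  set T : Set E := {m | ∃ e ∈ L, 0 < Q.σ e m} with hT
  have hTsub : T ⊆ L := by
    rintro m ⟨e, heL', hσ⟩
    have hVe : V e = x := hLW heL'
    have hactm : Q.act m = x := (hV e m hσ).symm.trans hVe
    have hrm : G.r m e := Q.feasible e m hσ
    have h1 : Q.act m ≤ V m := act_self_le hV m
    have h2 : V m ≤ V e := V_mono hV hrm
    have hmW : V m = x := le_antisymm (h2.trans_eq hVe) (hactm ▸ h1)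
    exact hlcs e heL' m hmW hrm
  have hμT : ∀ m ∈ T, Q.μ m = c := by
    rintro m ⟨e, heL', hσ⟩
    have hactm : Q.act m = x := (hV e m hσ).symm.trans (hLW heL')
    have hphi : G.φ (Q.μ m) = G.φ c := by rw [← Q.receiver_opt m, hactm, hφc]
    exact G.φ_mono.injOn (Q.μ_mem m) hc hphi
  -- the good-state and bad-state flow functions
  set Fg : E → E → ℝ := fun m e => Q.σ e m * (G.FG e * G.π0) with hFg
  set Fb : E → E → ℝ := fun m e => Q.σ e m * (G.FB e * (1 - G.π0)) with hFb
  have hπ1 : (0:ℝ) ≤ 1 - G.π0 := by linarith [G.π0_lt_one]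
  have hg0 : ∀ m e, 0 ≤ Fg m e := fun m e =>
    mul_nonneg (Q.σ_nonneg e m) (mul_nonneg (G.FG_nonneg e) G.π0_pos.le)
  have hb0 : ∀ m e, 0 ≤ Fb m e := fun m e =>
    mul_nonneg (Q.σ_nonneg e m) (mul_nonneg (G.FB_nonneg e) hπ1)
  have sG : Summable (fun e => G.FG e * G.π0) := G.FG_hasSum.summable.mul_right _
  have sB : Summable (fun e => G.FB e * (1 - G.π0)) := G.FB_hasSum.summable.mul_right _
  have sFg : ∀ m, Summable (Fg m) := fun m =>
    sG.of_nonneg_of_le (hg0 m) fun e =>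
      mul_le_of_le_one_left (mul_nonneg (G.FG_nonneg e) G.π0_pos.le) (sigma_le_one Q e m)
  have sFb : ∀ m, Summable (Fb m) := fun m =>
    sB.of_nonneg_of_le (hb0 m) fun e =>
      mul_le_of_le_one_left (mul_nonneg (G.FB_nonneg e) hπ1) (sigma_le_one Q e m)
  -- the key per-message inequality / equality
  have key : ∀ m ∈ T,
      c * ((∑' e : L, Fg m e) + (∑' e : L, Fb m e)) ≤ (∑' e : L, Fg m e) ∧
      (L = V ⁻¹' {x} →
        c * ((∑' e : L, Fg m e) + (∑' e : L, Fb m e)) = (∑' e : L, Fg m e)) := by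
    rintro m ⟨em, hemL, hσem⟩
    have hactm : Q.act m = x := (hV em m hσem).symm.trans (hLW hemL)
    have hmL : m ∈ L := hTsub ⟨em, hemL, hσem⟩
    have hB := Q.bayes m ⟨em, hσem⟩
    have hσ_supp : ∀ e, Q.σ e m ≠ 0 → G.r m e := fun e h =>
      Q.feasible e m (lt_of_le_of_ne (Q.σ_nonneg e m) (Ne.symm h))
    have hsuppg : Function.support (Fg m) ⊆ {e | G.r m e} := by
      intro e he
      have hσ : Q.σ e m ≠ 0 := fun h => he (by simp [hFg, h])
      exact hσ_supp e hσ
    have hsuppd : Function.support (fun e => Fg m e + Fb m e) ⊆ {e | G.r m e} := by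
      intro e he
      have hσ : Q.σ e m ≠ 0 := fun h => he (by simp [hFg, hFb, h])
      exact hσ_supp e hσ
    have hNg : (∑' e : {e : E // G.r m e}, Q.σ e.1 m * G.FG e.1 * G.π0)
        = ∑' e, Fg m e := by
      have h1 : (∑' e : {e : E // G.r m e}, Q.σ e.1 m * G.FG e.1 * G.π0)
          = ∑' e : {e : E // G.r m e}, Fg m e.1 :=
        tsum_congr fun e => by simp only [hFg]; ring
      rw [h1]
      exact tsum_subtype_eq_of_support_subset hsuppg
    have hNd : (∑' e : {e : E // G.r m e},
          Q.σ e.1 m * (G.FG e.1 * G.π0 + G.FB e.1 * (1 - G.π0)))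
        = ∑' e, (Fg m e + Fb m e) := by
      have h1 : (∑' e : {e : E // G.r m e},
            Q.σ e.1 m * (G.FG e.1 * G.π0 + G.FB e.1 * (1 - G.π0)))
          = ∑' e : {e : E // G.r m e}, (Fg m e.1 + Fb m e.1) :=
        tsum_congr fun e => by simp only [hFg, hFb]; ring
      rw [h1]
      exact tsum_subtype_eq_of_support_subset hsuppd
    have hden_pos : 0 < ∑' e, (Fg m e + Fb m e) := by
      have hterm : 0 < Fg m em + Fb m em := by
        have h1 : Fg m em + Fb m em
            = Q.σ em m * (G.FG em * G.π0 + G.FB em * (1 - G.π0)) := by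
          simp only [hFg, hFb]; ring
        rw [h1]
        exact mul_pos hσem (totpos G em)
      exact hterm.trans_le (Summable.le_tsum ((sFg m).add (sFb m)) em
        (fun j _ => add_nonneg (hg0 m j) (hb0 m j)))
    have hc_eq : (∑' e, Fg m e) = c * (∑' e, (Fg m e + Fb m e)) := by
      rw [hNg, hNd, hμT m ⟨em, hemL, hσem⟩] at hB
      exact (div_eq_iff hden_pos.ne').mp hB.symm
    have hsplitG : (∑' e : L, Fg m e) + (∑' e : ↥Lᶜ, Fg m e) = ∑' e, Fg m e :=
      Summable.tsum_add_tsum_compl ((sFg m).subtype L) ((sFg m).subtype Lᶜ)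
    have hsplitB : (∑' e : L, Fb m e) + (∑' e : ↥Lᶜ, Fb m e) = ∑' e, Fb m e :=
      Summable.tsum_add_tsum_compl ((sFb m).subtype L) ((sFb m).subtype Lᶜ)
    have hden : (∑' e, (Fg m e + Fb m e)) = (∑' e, Fg m e) + (∑' e, Fb m e) :=
      Summable.tsum_add (sFg m) (sFb m)
    have hObound : (∑' e : ↥Lᶜ, Fg m e) ≤
        c * ((∑' e : ↥Lᶜ, Fg m e) + (∑' e : ↥Lᶜ, Fb m e)) := by
      have hterm : ∀ e : ↥Lᶜ, Fg m e ≤ c * (Fg m e + Fb m e) := by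
        rintro ⟨e, he⟩
        by_cases hσ : Q.σ e m = 0
        · simp only [hFg, hFb, hσ, zero_mul, add_zero, mul_zero]
          norm_num
        · have hσpos : 0 < Q.σ e m := lt_of_le_of_ne (Q.σ_nonneg e m) (Ne.symm hσ)
          have heW : V e = x := (hV e m hσpos).trans hactm
          have hne : m ≠ e := fun h => he (h ▸ hmL)
          have hlt : Q.act e < V e := by
            rcases lt_or_eq_of_le (act_self_le hV e) with h | h
            · exact h
            · exact absurd (sigma_other_zero (sigma_self hV h) hne) hσ
          have hb := type_bound hV hc hφc hlt heW
          calc Fg m e = Q.σ e m * (G.FG e * G.π0) := rfl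
            _ ≤ Q.σ e m * (c * (G.FG e * G.π0 + G.FB e * (1 - G.π0))) :=
                mul_le_mul_of_nonneg_left hb (Q.σ_nonneg e m)
            _ = c * (Fg m e + Fb m e) := by simp only [hFg, hFb]; ring
      calc (∑' e : ↥Lᶜ, Fg m e) ≤ ∑' e : ↥Lᶜ, c * (Fg m e + Fb m e) :=
            Summable.tsum_le_tsum hterm ((sFg m).subtype _)
              ((((sFg m).add (sFb m)).subtype Lᶜ).mul_left c)
        _ = c * ((∑' e : ↥Lᶜ, Fg m e) + (∑' e : ↥Lᶜ, Fb m e)) := by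
            rw [tsum_mul_left]
            exact congrArg (fun z => c * z)
              (Summable.tsum_add ((sFg m).subtype Lᶜ) ((sFb m).subtype Lᶜ))
    have hmain : (∑' e : L, Fg m e) + (∑' e : ↥Lᶜ, Fg m e)
        = c * ((∑' e : L, Fg m e) + (∑' e : L, Fb m e))
          + c * ((∑' e : ↥Lᶜ, Fg m e) + (∑' e : ↥Lᶜ, Fb m e)) := by
      have h1 := hc_eq
      rw [hden, ← hsplitG, ← hsplitB] at h1
      linear_combination h1
    refine ⟨by linarith, ?_⟩
    intro hLw
    have hOg : (∑' e : ↥Lᶜ, Fg m e) = 0 := by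
      have hz : (fun e : ↥Lᶜ => Fg m e) = fun _ => 0 := by
        funext e
        obtain ⟨e, he⟩ := e
        by_contra hne0
        have hσ : Q.σ e m ≠ 0 := fun h => hne0 (by simp [hFg, h])
        have hσpos : 0 < Q.σ e m := lt_of_le_of_ne (Q.σ_nonneg e m) (Ne.symm hσ)
        have heW : V e = x := (hV e m hσpos).trans hactm
        exact he (hLw ▸ heW)
      rw [hz, tsum_zero]
    have hOb : (∑' e : ↥Lᶜ, Fb m e) = 0 := by
      have hz : (fun e : ↥Lᶜ => Fb m e) = fun _ => 0 := by
        funext e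
        obtain ⟨e, he⟩ := e
        by_contra hne0
        have hσ : Q.σ e m ≠ 0 := fun h => hne0 (by simp [hFb, h])
        have hσpos : 0 < Q.σ e m := lt_of_le_of_ne (Q.σ_nonneg e m) (Ne.symm hσ)
        have heW : V e = x := (hV e m hσpos).trans hactm
        exact he (hLw ▸ heW)
      rw [hz, tsum_zero]
    rw [hOg, hOb] at hmain
    linarith [hmain]
  -- summing over messages in T via Fubini
  have hsupp2 : ∀ e ∈ L, ∀ m', 0 < Q.σ e m' → m' ∈ T := fun e he m' h => ⟨e, he, h⟩
  have hwG : ∀ e, 0 ≤ G.FG e * G.π0 := fun e => mul_nonneg (G.FG_nonneg e) G.π0_pos.le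
  have hwB : ∀ e, 0 ≤ G.FB e * (1 - G.π0) := fun e => mul_nonneg (G.FB_nonneg e) hπ1
  obtain ⟨sumG, hsumG⟩ := fubini Q hsupp2 hwG sG
  obtain ⟨sumB, hsumB⟩ := fubini Q hsupp2 hwB sB
  have hGL : (∑' (m : T) (e : L), Fg m e) = (∑' e : L, G.FG e) * G.π0 := by
    rw [hsumG]
    exact tsum_mul_right
  have hBL : (∑' (m : T) (e : L), Fb m e) = (∑' e : L, G.FB e) * (1 - G.π0) := by
    rw [hsumB]
    exact tsum_mul_right
  refine ⟨c, hc, hφc, ?_, ?_⟩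
  · have hsum_le : (∑' m : T, c * ((∑' e : L, Fg m e) + (∑' e : L, Fb m e)))
        ≤ ∑' m : T, (∑' e : L, Fg m e) :=
      Summable.tsum_le_tsum (fun m => (key m m.2).1) ((sumG.add sumB).mul_left c) sumG
    have hLHS : (∑' m : T, c * ((∑' e : L, Fg m e) + (∑' e : L, Fb m e)))
        = c * ((∑' e : L, G.FG e) * G.π0 + (∑' e : L, G.FB e) * (1 - G.π0)) := by
      rw [tsum_mul_left, Summable.tsum_add sumG sumB, hGL, hBL]
    calc c * ((∑' e : L, G.FG e) * G.π0 + (∑' e : L, G.FB e) * (1 - G.π0))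
        = ∑' m : T, c * ((∑' e : L, Fg m e) + (∑' e : L, Fb m e)) := hLHS.symm
      _ ≤ ∑' m : T, (∑' e : L, Fg m e) := hsum_le
      _ = (∑' e : L, G.FG e) * G.π0 := hGL
  · intro hLw
    have hsum_eq : (∑' m : T, c * ((∑' e : L, Fg m e) + (∑' e : L, Fb m e)))
        = ∑' m : T, (∑' e : L, Fg m e) :=
      tsum_congr fun m => (key m m.2).2 hLw
    have hLHS : (∑' m : T, c * ((∑' e : L, Fg m e) + (∑' e : L, Fb m e)))
        = c * ((∑' e : L, G.FG e) * G.π0 + (∑' e : L, G.FB e) * (1 - G.π0)) := by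
      rw [tsum_mul_left, Summable.tsum_add sumG sumB, hGL, hBL]
    calc c * ((∑' e : L, G.FG e) * G.π0 + (∑' e : L, G.FB e) * (1 - G.π0))
        = ∑' m : T, c * ((∑' e : L, Fg m e) + (∑' e : L, Fb m e)) := hLHS.symm
      _ = ∑' m : T, (∑' e : L, Fg m e) := hsum_eq
      _ = (∑' e : L, G.FG e) * G.π0 := hGL

end TLMain

section TLFinal

variable {E : Type u} {G : DGame E} {Q : G.Eqm} {V : E → ℝ}

private lemma mass_pos (G : DGame E) {S : Set E} (hS : S.Nonempty) :
    0 < (∑' e : S, G.FG e) * G.π0 + (∑' e : S, G.FB e) * (1 - G.π0) := by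
  obtain ⟨e0, he0⟩ := hS
  have hπ1 : (0:ℝ) ≤ 1 - G.π0 := by linarith [G.π0_lt_one]
  have h1 : G.FG e0 ≤ ∑' e : S, G.FG e :=
    Summable.le_tsum (G.FG_hasSum.summable.subtype S) ⟨e0, he0⟩ (fun j _ => G.FG_nonneg j.1)
  have h2 : G.FB e0 ≤ ∑' e : S, G.FB e :=
    Summable.le_tsum (G.FB_hasSum.summable.subtype S) ⟨e0, he0⟩ (fun j _ => G.FB_nonneg j.1)
  have h3 := mul_le_mul_of_nonneg_right h1 G.π0_pos.le
  have h4 := mul_le_mul_of_nonneg_right h2 hπ1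
  have h5 := totpos G e0
  linarith

end TLFinal


/-- Theorem 1 (necessity; Lemma A.2): in any disclosure game, the sender's
value function of any truth-leaning equilibrium satisfies the Theorem-1
conditions. -/
theorem stmt_0 {E : Type u} [Countable E] (G : DGame E) (Q : G.Eqm)
    (V : E → ℝ) (hV : G.IsValueFn Q V) : G.Thm1Conds V := by
  refine ⟨fun e e' h => V_mono hV h, ?_, ?_⟩
  · rintro x ⟨e0, he0⟩
    have hW : G.IsLCS (V ⁻¹' {x}) (V ⁻¹' {x}) :=
      ⟨⟨e0, he0⟩, subset_rfl, fun _ _ e' he' _ => he'⟩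
    obtain ⟨c, hc, hφc, _, heq⟩ := main_ineq hV hW
    have heq := heq rfl
    have hmass := mass_pos G (⟨e0, he0⟩ : (V ⁻¹' {x} : Set E).Nonempty)
    have hnu : G.nu (V ⁻¹' {x}) = c := by
      unfold DGame.nu
      exact (div_eq_iff hmass.ne').mpr heq.symm
    unfold DGame.xi
    rw [hnu, hφc]
  · rintro x ⟨e0, he0⟩ L hL
    obtain ⟨c, hc, hφc, hle, _⟩ := main_ineq hV hL
    have hmass := mass_pos G hL.1
    have hcle : c ≤ G.nu L := by
      unfold DGame.nu
      rw [le_div_iff₀ hmass]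
      exact hle
    have hnuIcc := nu_mem G L
    calc x = G.φ c := hφc.symm
      _ ≤ G.φ (G.nu L) := G.φ_mono.monotoneOn hc hnuIcc hcle
      _ = G.xi L := rfl
end

section
/- Corollary 2 (partition characterization): In any disclosure game, a function V : E → ℝ satisfies the Theorem-1 conditions if and only if there exists an ordered partition (𝒜, ≤_P) of E satisfying the Corollary-2 conditions such that V(e) = ξ(𝒜(e)) for every e ∈ E, where 𝒜(e) denotes the cell of 𝒜 containing e. -/
open scoped BigOperators

universe u

/-- An ordered partition of `E`: a partition into nonempty cells together with
a total order on the cells. -/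
structure OPart (E : Type u) where
  cells : Set (Set E)
  cells_nonempty : ∀ A ∈ cells, A.Nonempty
  cover : ∀ e : E, ∃ A ∈ cells, e ∈ A
  disj : ∀ A ∈ cells, ∀ B ∈ cells, A ≠ B → Disjoint A B
  le : Set E → Set E → Prop
  le_refl : ∀ A ∈ cells, le A A
  le_trans : ∀ A ∈ cells, ∀ B ∈ cells, ∀ C ∈ cells, le A B → le B C → le A C
  le_antisymm : ∀ A ∈ cells, ∀ B ∈ cells, le A B → le B A → A = B
  le_total : ∀ A ∈ cells, ∀ B ∈ cells, le A B ∨ le B A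

/-- The Corollary-2 conditions on an ordered partition. -/
def Crl2Conds {E : Type u} (G : DGame E) (P : OPart E) : Prop :=
  (∀ A ∈ P.cells, ∀ B ∈ P.cells, P.le A B → A ≠ B → G.xi A < G.xi B) ∧
  (∀ A ∈ P.cells, ∀ B ∈ P.cells, ∀ e₁ ∈ A, ∀ e₂ ∈ B, G.r e₁ e₂ → P.le A B) ∧
  (∀ A ∈ P.cells, ∀ L : Set E, G.IsLCS A L → G.xi A ≤ G.xi L)

/-- Corollary 2 (partition characterization): `V` satisfies the Theorem-1
conditions iff there is an ordered partition satisfying the Corollary-2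
conditions with `V(e) = ξ(𝒜(e))` for every `e`. -/
theorem stmt_4 {E : Type u} [Countable E] (G : DGame E) (V : E → ℝ) :
    G.Thm1Conds V ↔
      ∃ P : OPart E, Crl2Conds G P ∧ ∀ e : E, ∃ A ∈ P.cells, e ∈ A ∧ V e = G.xi A := by
  constructor
  · rintro ⟨hmono, hxi, hlcs⟩
    refine ⟨{
      cells := {A | ∃ x ∈ Set.range V, A = V ⁻¹' {x}}
      cells_nonempty := by
        rintro A ⟨x, ⟨e, rfl⟩, rfl⟩
        exact ⟨e, rfl⟩
      cover := fun e => ⟨V ⁻¹' {V e}, ⟨V e, ⟨e, rfl⟩, rfl⟩, rfl⟩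
      disj := by
        rintro A ⟨x, hx, rfl⟩ B ⟨y, hy, rfl⟩ hne
        rw [Set.disjoint_left]
        rintro e (he : V e = x) (he' : V e = y)
        exact hne (by rw [← he, ← he'])
      le := fun A B => G.xi A ≤ G.xi B
      le_refl := fun A _ => le_refl _
      le_trans := fun A _ B _ C _ h1 h2 => h1.trans h2
      le_antisymm := by
        rintro A ⟨x, hx, rfl⟩ B ⟨y, hy, rfl⟩ h1 h2
        have hA := hxi x hx
        have hB := hxi y hy
        have hxy : x = y := by rw [← hA, ← hB]; exact le_antisymm h1 h2
        rw [hxy]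
      le_total := fun A _ B _ => le_total _ _
    }, ⟨?_, ?_, ?_⟩, ?_⟩
    · rintro A ⟨x, hx, rfl⟩ B ⟨y, hy, rfl⟩ hle hne
      refine lt_of_le_of_ne hle (fun h => hne ?_)
      rw [hxi x hx, hxi y hy] at h
      rw [h]
    · rintro A ⟨x, hx, rfl⟩ B ⟨y, hy, rfl⟩ e₁ he₁ e₂ he₂ hr
      have hm := hmono e₁ e₂ hr
      simp only [Set.mem_preimage, Set.mem_singleton_iff] at he₁ he₂
      show G.xi _ ≤ G.xi _
      rw [hxi x hx, hxi y hy, ← he₁, ← he₂]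
      exact hm
    · rintro A ⟨x, hx, rfl⟩ L hL
      rw [hxi x hx]
      exact hlcs x hx L hL
    · intro e
      exact ⟨V ⁻¹' {V e}, ⟨V e, ⟨e, rfl⟩, rfl⟩, rfl, (hxi (V e) ⟨e, rfl⟩).symm⟩
  · rintro ⟨P, ⟨h1, h2, h3⟩, hV⟩
    have cellu : ∀ A ∈ P.cells, ∀ B ∈ P.cells, ∀ e, e ∈ A → e ∈ B → A = B := by
      intro A hA B hB e heA heB
      by_contra hne
      exact Set.disjoint_left.mp (P.disj A hA B hB hne) heA heB
    have xiinj : ∀ A ∈ P.cells, ∀ B ∈ P.cells, G.xi A = G.xi B → A = B := by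
      intro A hA B hB heq
      by_contra hne
      rcases P.le_total A hA B hB with h | h
      · exact absurd heq (h1 A hA B hB h hne).ne
      · exact absurd heq.symm (h1 B hB A hA h (Ne.symm hne)).ne
    have key : ∀ e : E, ∃ A ∈ P.cells, V ⁻¹' {V e} = A ∧ V e = G.xi A := by
      intro e
      obtain ⟨A, hA, heA, hVA⟩ := hV e
      refine ⟨A, hA, ?_, hVA⟩
      ext e'
      simp only [Set.mem_preimage, Set.mem_singleton_iff]
      constructor
      · intro hv
        obtain ⟨B, hB, heB, hVB⟩ := hV e'
        have : B = A := xiinj B hB A hA (by rw [← hVB, hv, hVA])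
        exact this ▸ heB
      · intro he'
        obtain ⟨B, hB, heB, hVB⟩ := hV e'
        have hBA : B = A := cellu B hB A hA e' heB he'
        rw [hVB, hBA, ← hVA]
    refine ⟨?_, ?_, ?_⟩
    · intro e e' hr
      obtain ⟨A, hA, heA, hVA⟩ := hV e
      obtain ⟨B, hB, heB, hVB⟩ := hV e'
      have hle := h2 A hA B hB e heA e' heB hr
      rw [hVA, hVB]
      by_cases hAB : A = B
      · rw [hAB]
      · exact (h1 A hA B hB hle hAB).le
    · rintro x ⟨e, rfl⟩
      obtain ⟨A, hA, hset, hVA⟩ := key e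
      rw [hset, ← hVA]
    · rintro x ⟨e, rfl⟩ L hL
      obtain ⟨A, hA, hset, hVA⟩ := key e
      rw [hset] at hL
      rw [hVA]
      exact h3 A hA L hL
end

section
/- Corollary 2 (uniqueness of the equilibrium partition): In any disclosure game, at most one ordered partition of E satisfies the Corollary-2 conditions: if (𝒜, ≤_P) and (𝒜*, ≤_P*) both satisfy them, then 𝒜 = 𝒜* and the orders ≤_P and ≤_P* coincide. -/
open scoped BigOperators

universe u

namespace Crl2Proof

open Set

variable {E : Type u} (G : DGame E)

noncomputable def gA (S : Set E) : ℝ := ∑' e : S, G.FG e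
noncomputable def bA (S : Set E) : ℝ := ∑' e : S, G.FB e
noncomputable def wA (S : Set E) : ℝ := gA G S * G.π0 + bA G S * (1 - G.π0)

lemma nu_eq (S : Set E) : G.nu S = gA G S * G.π0 / wA G S := rfl

lemma sumG (S : Set E) : Summable (fun x : S => G.FG x) := G.FG_hasSum.summable.subtype S
lemma sumB (S : Set E) : Summable (fun x : S => G.FB x) := G.FB_hasSum.summable.subtype S

lemma gA_nonneg (S : Set E) : 0 ≤ gA G S := tsum_nonneg fun e => G.FG_nonneg e
lemma bA_nonneg (S : Set E) : 0 ≤ bA G S := tsum_nonneg fun e => G.FB_nonneg e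

lemma wA_pos {S : Set E} (hS : S.Nonempty) : 0 < wA G S := by
  obtain ⟨e, he⟩ := hS
  have h1 : G.FG e ≤ gA G S := Summable.le_tsum (sumG G S) ⟨e, he⟩ (fun b _ => G.FG_nonneg b)
  have h2 : G.FB e ≤ bA G S := Summable.le_tsum (sumB G S) ⟨e, he⟩ (fun b _ => G.FB_nonneg b)
  have h3 := G.FGB_pos e
  have h4 := G.π0_pos
  have h5 := G.π0_lt_one
  have h6 := G.FG_nonneg e
  have h7 := G.FB_nonneg e
  unfold wA
  have hx : 0 < G.FG e * G.π0 + G.FB e * (1 - G.π0) := by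
    rcases lt_or_eq_of_le h6 with hpos | heq
    · nlinarith [mul_pos hpos h4, mul_nonneg h7 (by linarith : (0:ℝ) ≤ 1 - G.π0)]
    · have hbpos : 0 < G.FB e := by linarith
      nlinarith [mul_pos hbpos (show (0:ℝ) < 1 - G.π0 by linarith), mul_nonneg h6 h4.le]
  nlinarith [mul_le_mul_of_nonneg_right h1 h4.le,
    mul_le_mul_of_nonneg_right h2 (by linarith : (0:ℝ) ≤ 1 - G.π0)]

lemma nu_mem (S : Set E) : G.nu S ∈ Icc (0:ℝ) 1 := by
  have hg := gA_nonneg G S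
  have hb := bA_nonneg G S
  have h4 := G.π0_pos
  have h5 := G.π0_lt_one
  rw [nu_eq]
  unfold wA
  have k1 : (0:ℝ) ≤ gA G S * G.π0 := mul_nonneg hg h4.le
  have k2 : (0:ℝ) ≤ bA G S * (1 - G.π0) := mul_nonneg hb (by linarith)
  constructor
  · exact div_nonneg k1 (by linarith)
  · exact div_le_one_of_le₀ (by linarith) (by linarith)

lemma nu_le_of_xi_le {A B : Set E} (h : G.xi A ≤ G.xi B) : G.nu A ≤ G.nu B := by
  by_contra hc
  push_neg at hc
  exact absurd h (not_le.2 (G.φ_mono (nu_mem G B) (nu_mem G A) hc))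

lemma nu_lt_of_xi_lt {A B : Set E} (h : G.xi A < G.xi B) : G.nu A < G.nu B := by
  by_contra hc
  push_neg at hc
  exact absurd h (not_lt.2 (G.φ_mono.monotoneOn (nu_mem G B) (nu_mem G A) hc))

lemma piece_sum {ι : Type u} (f : E → ℝ) (hf : Summable f) (A : ι → Set E)
    (hd : Pairwise (Function.onFun Disjoint A)) {S : Set E} (hU : (⋃ i, A i) = S) :
    HasSum (fun i => ∑' x : A i, f x) (∑' x : S, f x) := by
  subst hU
  have hsu : Summable (fun x : ↥(⋃ i, A i) => f x) := hf.subtype _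
  set e := Set.unionEqSigmaOfDisjoint hd with he
  have hcomp : (fun x : ↥(⋃ i, A i) => f x) ∘ e.symm = fun p : Σ i, ↥(A i) => f p.2 := by
    funext p; rcases p with ⟨i, x⟩; rfl
  have hss : Summable (fun p : Σ i, ↥(A i) => f p.2) := by
    have := (e.symm.summable_iff (f := fun x : ↥(⋃ i, A i) => f x)).2 hsu
    rwa [hcomp] at this
  have h1 : ∑' p : Σ i, ↥(A i), f p.2 = ∑' x : ↥(⋃ i, A i), f x := by
    rw [← e.symm.tsum_eq (fun x : ↥(⋃ i, A i) => f x)]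
    exact tsum_congr fun p => by rcases p with ⟨i, x⟩; rfl
  have h2 : ∑' p : Σ i, ↥(A i), f p.2 = ∑' i, ∑' x : A i, f x := Summable.tsum_sigma hss
  have hout : Summable (fun i => ∑' x : A i, f x) := hss.sigma
  have := hout.hasSum
  rwa [← h2, h1] at this

noncomputable def cellOf (P : OPart E) (e : E) : Set E := (P.cover e).choose

lemma cellOf_mem (P : OPart E) (e : E) : cellOf P e ∈ P.cells := (P.cover e).choose_spec.1
lemma mem_cellOf (P : OPart E) (e : E) : e ∈ cellOf P e := (P.cover e).choose_spec.2

lemma eq_cellOf (P : OPart E) {A : Set E} {e : E} (hA : A ∈ P.cells) (he : e ∈ A) :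
    A = cellOf P e := by
  by_contra hne
  exact Set.disjoint_left.1 (P.disj A hA _ (cellOf_mem P e) hne) he (mem_cellOf P e)

variable {P P' : OPart E}

lemma le_nu_mono (h : Crl2Conds G P) {A B : Set E} (hA : A ∈ P.cells) (hB : B ∈ P.cells)
    (hle : P.le A B) : G.nu A ≤ G.nu B := by
  rcases eq_or_ne A B with rfl | hne
  · exact le_refl _
  · exact (nu_lt_of_xi_lt G (h.1 A hA B hB hle hne)).le

lemma r_nu (h : Crl2Conds G P) {e e' : E} (hr : G.r e' e) :
    G.nu (cellOf P e') ≤ G.nu (cellOf P e) :=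
  le_nu_mono G h (cellOf_mem P e') (cellOf_mem P e)
    (h.2.1 _ (cellOf_mem P e') _ (cellOf_mem P e) e' (mem_cellOf P e') e (mem_cellOf P e) hr)

lemma lcs_nu (h : Crl2Conds G P) {A L : Set E} (hA : A ∈ P.cells) (hL : G.IsLCS A L) :
    G.nu A ≤ G.nu L := nu_le_of_xi_le G (h.2.2 A hA L hL)

lemma no_cross (P P' : OPart E) (h : Crl2Conds G P) (h' : Crl2Conds G P') (e0 : E) :
    ¬ G.nu (cellOf P e0) < G.nu (cellOf P' e0) := by
  intro hlt
  set c : ℝ := G.nu (cellOf P' e0) with hc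
  set L : Set E := {e | G.nu (cellOf P e) < c ∧ c ≤ G.nu (cellOf P' e)} with hLdef
  have he0 : e0 ∈ L := ⟨hlt, le_refl c⟩
  -- Part I : c * wA L ≤ gA L * π0   (decompose L along cells of P')
  have partI : c * wA G L ≤ gA G L * G.π0 := by
    set t : E → Set E := fun e => L ∩ cellOf P' e with ht
    have hU : (⋃ i : ↥(t '' L), (i : Set E)) = L := by
      apply Set.Subset.antisymm
      · apply Set.iUnion_subset
        rintro ⟨Q, x, hxL, rfl⟩
        exact Set.inter_subset_left
      · intro x hx
        exact Set.mem_iUnion.2 ⟨⟨t x, ⟨x, hx, rfl⟩⟩, ⟨hx, mem_cellOf P' x⟩⟩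
    have hd : Pairwise (Function.onFun Disjoint fun i : ↥(t '' L) => (i : Set E)) := by
      rintro ⟨Q1, hQ1⟩ ⟨Q2, hQ2⟩ hne
      obtain ⟨x1, hx1, rfl⟩ := hQ1
      obtain ⟨x2, hx2, rfl⟩ := hQ2
      have hcells : cellOf P' x1 ≠ cellOf P' x2 := by
        intro hceq
        exact hne (Subtype.ext (by simp only [ht, hceq]))
      exact Disjoint.mono Set.inter_subset_right Set.inter_subset_right
        (P'.disj _ (cellOf_mem P' x1) _ (cellOf_mem P' x2) hcells)
    have hg := piece_sum G.FG G.FG_hasSum.summable _ hd hU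
    have hb := piece_sum G.FB G.FB_hasSum.summable _ hd hU
    have hw : HasSum (fun i : ↥(t '' L) => wA G (i : Set E)) (wA G L) := by
      unfold wA
      exact (hg.mul_right G.π0).add (hb.mul_right (1 - G.π0))
    refine hasSum_le ?_ (hw.mul_left c) (hg.mul_right G.π0)
    rintro ⟨Q, hQ⟩
    obtain ⟨x, hxL, rfl⟩ := hQ
    -- per-piece : c * wA (t x) ≤ gA (t x) * π0
    have hne : (t x).Nonempty := ⟨x, hxL, mem_cellOf P' x⟩
    have hlcs : G.IsLCS (cellOf P' x) (t x) := by
      refine ⟨hne, Set.inter_subset_right, ?_⟩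
      intro a haQ a' ha'A hr
      refine ⟨⟨lt_of_le_of_lt (r_nu G h hr) haQ.1.1, ?_⟩, ha'A⟩
      rw [← eq_cellOf P' (cellOf_mem P' x) ha'A]
      exact hxL.2
    have h1 : c ≤ G.nu (t x) := hxL.2.trans (lcs_nu G h' (cellOf_mem P' x) hlcs)
    rw [nu_eq] at h1
    exact (le_div_iff₀ (wA_pos G hne)).1 h1
  -- Part II : gA L * π0 < c * wA L   (decompose L along cells of P)
  have partII : gA G L * G.π0 < c * wA G L := by
    set t : E → Set E := fun e => L ∩ cellOf P e with ht
    have hU : (⋃ i : ↥(t '' L), (i : Set E)) = L := by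
      apply Set.Subset.antisymm
      · apply Set.iUnion_subset
        rintro ⟨Q, x, hxL, rfl⟩
        exact Set.inter_subset_left
      · intro x hx
        exact Set.mem_iUnion.2 ⟨⟨t x, ⟨x, hx, rfl⟩⟩, ⟨hx, mem_cellOf P x⟩⟩
    have hd : Pairwise (Function.onFun Disjoint fun i : ↥(t '' L) => (i : Set E)) := by
      rintro ⟨Q1, hQ1⟩ ⟨Q2, hQ2⟩ hne
      obtain ⟨x1, hx1, rfl⟩ := hQ1
      obtain ⟨x2, hx2, rfl⟩ := hQ2
      have hcells : cellOf P x1 ≠ cellOf P x2 := by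
        intro hceq
        exact hne (Subtype.ext (by simp only [ht, hceq]))
      exact Disjoint.mono Set.inter_subset_right Set.inter_subset_right
        (P.disj _ (cellOf_mem P x1) _ (cellOf_mem P x2) hcells)
    have hg := piece_sum G.FG G.FG_hasSum.summable _ hd hU
    have hb := piece_sum G.FB G.FB_hasSum.summable _ hd hU
    have hw : HasSum (fun i : ↥(t '' L) => wA G (i : Set E)) (wA G L) := by
      unfold wA
      exact (hg.mul_right G.π0).add (hb.mul_right (1 - G.π0))
    have key : ∀ i : ↥(t '' L), gA G (i : Set E) * G.π0 < c * wA G (i : Set E) := by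
      rintro ⟨Q, hQ⟩
      obtain ⟨x, hxL, rfl⟩ := hQ
      show gA G (t x) * G.π0 < c * wA G (t x)
      have hxA : x ∈ cellOf P x := mem_cellOf P x
      have hQne : (t x).Nonempty := ⟨x, hxL, hxA⟩
      have hwQ : 0 < wA G (t x) := wA_pos G hQne
      have hnuA : G.nu (cellOf P x) < c := hxL.1
      have hQsub : t x ⊆ cellOf P x := Set.inter_subset_right
      have hAne : (cellOf P x).Nonempty := ⟨x, hxA⟩
      have hwA' : 0 < wA G (cellOf P x) := wA_pos G hAne
      have hgAeq : gA G (cellOf P x) * G.π0 = G.nu (cellOf P x) * wA G (cellOf P x) := by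
        rw [nu_eq, div_mul_cancel₀]
        exact ne_of_gt hwA'
      by_cases hR : (cellOf P x \ t x).Nonempty
      · have hlcsR : G.IsLCS (cellOf P x) (cellOf P x \ t x) := by
          refine ⟨hR, Set.diff_subset, ?_⟩
          intro a haR a' ha'A hr
          refine ⟨ha'A, ?_⟩
          intro ha'Q
          -- a ∈ A \ t x : a ∉ L, and a ∈ A so nu (cellOf P a) < c, hence c > nu (cellOf P' a)
          have haA : cellOf P a = cellOf P x := (eq_cellOf P (cellOf_mem P x) haR.1).symm
          have haL : a ∉ L := fun haL => haR.2 ⟨haL, haR.1⟩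
          have hanu : G.nu (cellOf P' a) < c := by
            by_contra hle2
            push_neg at hle2
            exact haL ⟨by rw [haA]; exact hnuA, hle2⟩
          have := lt_of_le_of_lt (r_nu G h' hr) hanu
          exact absurd ha'Q.1.2 (not_le.2 this)
        have hnuR := lcs_nu G h (cellOf_mem P x) hlcsR
        have hsplitG : gA G (cellOf P x) = gA G (t x) + gA G (cellOf P x \ t x) := by
          unfold gA
          rw [← Summable.tsum_union_disjoint (f := G.FG) Set.disjoint_sdiff_right
            (G.FG_hasSum.summable.subtype _) (G.FG_hasSum.summable.subtype _),
            Set.union_diff_cancel hQsub]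
        have hsplitB : bA G (cellOf P x) = bA G (t x) + bA G (cellOf P x \ t x) := by
          unfold bA
          rw [← Summable.tsum_union_disjoint (f := G.FB) Set.disjoint_sdiff_right
            (G.FB_hasSum.summable.subtype _) (G.FB_hasSum.summable.subtype _),
            Set.union_diff_cancel hQsub]
        have hsplitW : wA G (cellOf P x) = wA G (t x) + wA G (cellOf P x \ t x) := by
          unfold wA
          rw [hsplitG, hsplitB]; ring
        have hwR : 0 < wA G (cellOf P x \ t x) := wA_pos G hR
        have hnuRw : G.nu (cellOf P x) * wA G (cellOf P x \ t x) ≤ gA G (cellOf P x \ t x) * G.π0 := by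
          rw [nu_eq (S := cellOf P x \ t x)] at hnuR
          exact (le_div_iff₀ hwR).1 hnuR
        have hnu0 : 0 ≤ G.nu (cellOf P x) := (nu_mem G _).1
        have h8 : G.nu (cellOf P x) * wA G (cellOf P x)
            = G.nu (cellOf P x) * wA G (t x) + G.nu (cellOf P x) * wA G (cellOf P x \ t x) := by
          rw [hsplitW]; ring
        have h9 : gA G (cellOf P x) * G.π0
            = gA G (t x) * G.π0 + gA G (cellOf P x \ t x) * G.π0 := by
          rw [hsplitG]; ring
        linarith [mul_lt_mul_of_pos_right hnuA hwQ]
      · have hQA : t x = cellOf P x := by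
          refine Set.Subset.antisymm hQsub ?_
          intro a ha
          by_contra hna
          exact hR ⟨a, ha, hna⟩
        rw [hQA]
        rw [hgAeq]
        exact mul_lt_mul_of_pos_right hnuA hwA'
    refine hasSum_lt (fun i => (key i).le) (key ⟨t e0, ⟨e0, he0, rfl⟩⟩)
      (hg.mul_right G.π0) (hw.mul_left c)
  exact absurd (lt_of_le_of_lt partI partII) (lt_irrefl _)

lemma nu_inj (h : Crl2Conds G P) {A B : Set E} (hA : A ∈ P.cells) (hB : B ∈ P.cells)
    (hnu : G.nu A = G.nu B) : A = B := by
  rcases eq_or_ne A B with rfl | hne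
  · rfl
  · rcases P.le_total A hA B hB with hle | hle
    · exact absurd hnu (ne_of_lt (nu_lt_of_xi_lt G (h.1 A hA B hB hle hne)))
    · exact absurd hnu.symm (ne_of_lt (nu_lt_of_xi_lt G (h.1 B hB A hA hle hne.symm)))

lemma le_iff_nu (h : Crl2Conds G P) {A B : Set E} (hA : A ∈ P.cells) (hB : B ∈ P.cells) :
    P.le A B ↔ G.nu A ≤ G.nu B := by
  constructor
  · exact le_nu_mono G h hA hB
  · intro hnu
    rcases eq_or_ne A B with rfl | hne
    · exact P.le_refl A hA
    · rcases P.le_total A hA B hB with hle | hle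
      · exact hle
      · exact absurd hnu (not_le.2 (nu_lt_of_xi_lt G (h.1 B hB A hA hle hne.symm)))

lemma cells_sub (h : Crl2Conds G P) (h' : Crl2Conds G P')
    (key : ∀ e : E, G.nu (cellOf P e) = G.nu (cellOf P' e)) :
    ∀ A ∈ P.cells, A ∈ P'.cells := by
  intro A hA
  obtain ⟨e, he⟩ := P.cells_nonempty A hA
  have hAe : A = cellOf P e := eq_cellOf P hA he
  suffices hs : A = cellOf P' e by rw [hs]; exact cellOf_mem P' e
  apply Set.Subset.antisymm
  · intro x hx
    have h1 : A = cellOf P x := eq_cellOf P hA hx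
    have h2 : G.nu (cellOf P' x) = G.nu (cellOf P' e) := by
      rw [← key x, ← key e, ← h1, ← hAe]
    have h3 := nu_inj G h' (cellOf_mem P' x) (cellOf_mem P' e) h2
    rw [← h3]
    exact mem_cellOf P' x
  · intro x hx
    have h1 : cellOf P' e = cellOf P' x := eq_cellOf P' (cellOf_mem P' e) hx
    have h2 : G.nu (cellOf P x) = G.nu (cellOf P e) := by
      rw [key x, key e, ← h1]
    have h3 := nu_inj G h (cellOf_mem P x) (cellOf_mem P e) h2
    rw [hAe, ← eq_cellOf P (cellOf_mem P e) (mem_cellOf P e), ← h3]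
    exact mem_cellOf P x

end Crl2Proof

/-- Corollary 2 (uniqueness of the equilibrium partition): at most one ordered
partition satisfies the Corollary-2 conditions. -/
theorem stmt_5 {E : Type u} [Countable E] (G : DGame E) (P P' : OPart E)
    (h : Crl2Conds G P) (h' : Crl2Conds G P') :
    P.cells = P'.cells ∧ ∀ A ∈ P.cells, ∀ B ∈ P.cells, (P.le A B ↔ P'.le A B) := by
  classical
  have key : ∀ e : E, G.nu (Crl2Proof.cellOf P e) = G.nu (Crl2Proof.cellOf P' e) := fun e =>
    le_antisymm (not_lt.1 (Crl2Proof.no_cross G P' P h' h e))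
      (not_lt.1 (Crl2Proof.no_cross G P P' h h' e))
  have key' : ∀ e : E, G.nu (Crl2Proof.cellOf P' e) = G.nu (Crl2Proof.cellOf P e) :=
    fun e => (key e).symm
  have hcells : P.cells = P'.cells :=
    Set.Subset.antisymm (Crl2Proof.cells_sub G h h' key) (Crl2Proof.cells_sub G h' h key')
  refine ⟨hcells, ?_⟩
  intro A hA B hB
  have hA' : A ∈ P'.cells := hcells ▸ hA
  have hB' : B ∈ P'.cells := hcells ▸ hB
  rw [Crl2Proof.le_iff_nu G h hA hB, Crl2Proof.le_iff_nu G h' hA' hB']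
end

section
/- Theorem 3: In any disclosure game, an ordered partition (𝒜, ≤_P) of E satisfies the Corollary-2 conditions if and only if every A ∈ 𝒜 is the largest lower contour set minimizing ξ in E_A := E \ ∪{A′ ∈ 𝒜 : A′ <_P A}; that is, A is a lower contour set in E_A with ξ(A) ≤ ξ(L) for every lower contour set L in E_A, and every lower contour set L in E_A with ξ(L) = ξ(A) satisfies L ⊆ A. -/
open scoped BigOperators

universe u

/-- The residual evidence set `E_A = E \ ⋃ {A' ∈ 𝒜 : A' <_P A}`. -/
def resid {E : Type u} (P : OPart E) (A : Set E) : Set E :=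
  Set.univ \ ⋃₀ {A' | A' ∈ P.cells ∧ P.le A' A ∧ A' ≠ A}

section Thm3Aux

namespace DGame

variable {E : Type u} (G : DGame E)

/-- pointwise "good mass" density -/
noncomputable def wd (e : E) : ℝ := G.FG e * G.π0

/-- pointwise total mass density -/
noncomputable def md (e : E) : ℝ := G.FG e * G.π0 + G.FB e * (1 - G.π0)

lemma wd_nonneg (e : E) : 0 ≤ G.wd e :=
  mul_nonneg (G.FG_nonneg e) G.π0_pos.le

lemma wd_le_md (e : E) : G.wd e ≤ G.md e := by
  have h1 : 0 ≤ G.FB e * (1 - G.π0) :=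
    mul_nonneg (G.FB_nonneg e) (by linarith [G.π0_lt_one])
  simp only [wd, md]; linarith

lemma md_pos (e : E) : 0 < G.md e := by
  have h := G.FGB_pos e
  have h1 := G.FG_nonneg e
  have h2 := G.FB_nonneg e
  have h3 := G.π0_pos
  have h4 := G.π0_lt_one
  simp only [md]
  rcases h1.lt_or_eq with hg | hg
  · nlinarith
  · nlinarith

lemma summable_FG : Summable G.FG := G.FG_hasSum.summable
lemma summable_FB : Summable G.FB := G.FB_hasSum.summable

lemma summable_wd : Summable G.wd := G.summable_FG.mul_right _
lemma summable_md : Summable G.md := (G.summable_FG.mul_right _).add (G.summable_FB.mul_right _)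

/-- total good mass of a set -/
noncomputable def Wm (X : Set E) : ℝ := ∑' e : X, G.wd e

/-- total mass of a set -/
noncomputable def Mm (X : Set E) : ℝ := ∑' e : X, G.md e

lemma summable_wd_sub (X : Set E) : Summable fun e : X => G.wd e :=
  G.summable_wd.subtype X

lemma summable_md_sub (X : Set E) : Summable fun e : X => G.md e :=
  G.summable_md.subtype X

lemma Wm_nonneg (X : Set E) : 0 ≤ G.Wm X :=
  tsum_nonneg fun e => G.wd_nonneg e

lemma Mm_nonneg (X : Set E) : 0 ≤ G.Mm X :=
  tsum_nonneg fun e => (G.md_pos e).le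

lemma Wm_le_Mm (X : Set E) : G.Wm X ≤ G.Mm X :=
  Summable.tsum_le_tsum (fun e => G.wd_le_md e) (G.summable_wd_sub X) (G.summable_md_sub X)

lemma Mm_pos {X : Set E} (hX : X.Nonempty) : 0 < G.Mm X := by
  obtain ⟨e, he⟩ := hX
  exact Summable.tsum_pos (G.summable_md_sub X) (fun i => (G.md_pos i).le) ⟨e, he⟩ (G.md_pos e)

lemma Mm_mono {X Y : Set E} (h : X ⊆ Y) : G.Mm X ≤ G.Mm Y := by
  refine Summable.tsum_le_tsum_of_inj (Set.inclusion h) (Set.inclusion_injective h)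
    (fun c _ => (G.md_pos c).le) (fun i => le_rfl) (G.summable_md_sub X) (G.summable_md_sub Y)

lemma nu_eq (X : Set E) : G.nu X = G.Wm X / G.Mm X := by
  have h1 : G.Wm X = (∑' e : X, G.FG e) * G.π0 := by
    simp only [Wm, wd]; exact tsum_mul_right
  have h2 : G.Mm X = (∑' e : X, G.FG e) * G.π0 + (∑' e : X, G.FB e) * (1 - G.π0) := by
    have s1 : Summable fun e : X => G.FG ↑e * G.π0 := (G.summable_FG.subtype X).mul_right _
    have s2 : Summable fun e : X => G.FB ↑e * (1 - G.π0) := (G.summable_FB.subtype X).mul_right _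
    simp only [Mm, md]
    rw [Summable.tsum_add s1 s2, tsum_mul_right, tsum_mul_right]
  rw [nu, h1, h2]

lemma nu_mem (X : Set E) : G.nu X ∈ Set.Icc (0:ℝ) 1 := by
  rw [G.nu_eq X]
  rcases eq_or_lt_of_le (G.Mm_nonneg X) with h | h
  · have hW : G.Wm X = 0 := le_antisymm (h ▸ G.Wm_le_Mm X) (G.Wm_nonneg X)
    simp [hW]
  · constructor
    · exact div_nonneg (G.Wm_nonneg X) (G.Mm_nonneg X)
    · rw [div_le_one h]; exact G.Wm_le_Mm X

lemma le_nu_iff {X : Set E} (hX : X.Nonempty) {c : ℝ} :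
    c ≤ G.nu X ↔ c * G.Mm X ≤ G.Wm X := by
  rw [G.nu_eq X, le_div_iff₀ (G.Mm_pos hX)]

lemma lt_nu_iff {X : Set E} (hX : X.Nonempty) {c : ℝ} :
    c < G.nu X ↔ c * G.Mm X < G.Wm X := by
  rw [G.nu_eq X, lt_div_iff₀ (G.Mm_pos hX)]

lemma nu_le_iff {X : Set E} (hX : X.Nonempty) {c : ℝ} :
    G.nu X ≤ c ↔ G.Wm X ≤ c * G.Mm X := by
  rw [G.nu_eq X, div_le_iff₀ (G.Mm_pos hX)]

lemma xi_le_iff (X Y : Set E) : G.xi X ≤ G.xi Y ↔ G.nu X ≤ G.nu Y :=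
  G.φ_mono.le_iff_le (G.nu_mem X) (G.nu_mem Y)

lemma xi_lt_iff (X Y : Set E) : G.xi X < G.xi Y ↔ G.nu X < G.nu Y :=
  G.φ_mono.lt_iff_lt (G.nu_mem X) (G.nu_mem Y)

lemma Wm_union {X Y : Set E} (h : Disjoint X Y) :
    G.Wm (X ∪ Y) = G.Wm X + G.Wm Y :=
  Summable.tsum_union_disjoint h (G.summable_wd.subtype X) (G.summable_wd.subtype Y)

lemma Mm_union {X Y : Set E} (h : Disjoint X Y) :
    G.Mm (X ∪ Y) = G.Mm X + G.Mm Y :=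
  Summable.tsum_union_disjoint h (G.summable_md.subtype X) (G.summable_md.subtype Y)

end DGame

end Thm3Aux
section PartAux

namespace OPart

variable {E : Type u} (P : OPart E)

/-- The cell containing `e`. -/
noncomputable def cellOf (e : E) : Set E := (P.cover e).choose

lemma cellOf_mem_cells (e : E) : P.cellOf e ∈ P.cells := (P.cover e).choose_spec.1

lemma mem_cellOf (e : E) : e ∈ P.cellOf e := (P.cover e).choose_spec.2

lemma cell_unique {A B : Set E} (hA : A ∈ P.cells) (hB : B ∈ P.cells) {e : E}
    (heA : e ∈ A) (heB : e ∈ B) : A = B := by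
  by_contra hne
  exact Set.disjoint_left.mp (P.disj A hA B hB hne) heA heB

lemma cellOf_eq {A : Set E} (hA : A ∈ P.cells) {e : E} (he : e ∈ A) : P.cellOf e = A :=
  P.cell_unique (P.cellOf_mem_cells e) hA (P.mem_cellOf e) he

end OPart

namespace DGame

open scoped Classical

variable {E : Type u} (G : DGame E) (P : OPart E)

/-- Decompose a sum over `X` into sums over the intersections with the cells. -/
lemma tsum_part (X : Set E) (h : E → ℝ) (hs : Summable fun e : X => h e) :
    (∑' e : X, h ↑e = ∑' A : Set E, (if A ∈ P.cells then ∑' e : ↥(A ∩ X), h ↑e else 0)) ∧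
    Summable (fun A : Set E => if A ∈ P.cells then ∑' e : ↥(A ∩ X), h ↑e else 0) := by
  classical
  set f : X → Set E := fun x => P.cellOf ↑x with hf
  let e1 : ((A : Set E) × {x : X // f x = A}) ≃ X := Equiv.sigmaFiberEquiv f
  have hs' : Summable fun p : (A : Set E) × {x : X // f x = A} => h ↑(e1 p) :=
    (Equiv.summable_iff e1 (f := fun x : X => h ↑x)).mpr hs
  have inner_eq : ∀ A : Set E,
      (∑' x : {x : X // f x = A}, h ↑(x : X)) =
        (if A ∈ P.cells then ∑' e : ↥(A ∩ X), h ↑e else 0) := by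
    intro A
    by_cases hA : A ∈ P.cells
    · rw [if_pos hA]
      let eq2 : {x : X // f x = A} ≃ ↥(A ∩ X) :=
        { toFun := fun x => ⟨↑↑x, by
            constructor
            · have := P.mem_cellOf (↑(↑x : X) : E)
              rw [show P.cellOf ↑(↑x : X) = A from x.2] at this
              exact this
            · exact (↑x : X).2⟩
          invFun := fun e => ⟨⟨↑e, e.2.2⟩, P.cellOf_eq hA e.2.1⟩
          left_inv := fun x => by ext; rfl
          right_inv := fun e => by ext; rfl }
      have heq := Equiv.tsum_eq eq2.symm (fun x : {x : X // f x = A} => h ↑(x : X))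
      exact heq.symm.trans rfl
    · rw [if_neg hA]
      have hempty : IsEmpty {x : X // f x = A} := by
        constructor
        rintro ⟨x, hx⟩
        exact hA (hx ▸ P.cellOf_mem_cells ↑x)
      exact tsum_empty
  have key : ∑' x : X, h ↑x = ∑' (A : Set E), ∑' x : {x : X // f x = A}, h ↑(x : X) :=
    calc ∑' x : X, h ↑x
        = ∑' p : (A : Set E) × {x : X // f x = A}, h ↑(e1 p) := (Equiv.tsum_eq e1 _).symm
      _ = ∑' (A : Set E), ∑' x : {x : X // f x = A}, h ↑(e1 ⟨A, x⟩) := Summable.tsum_sigma hs'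
      _ = ∑' (A : Set E), ∑' x : {x : X // f x = A}, h ↑(x : X) := rfl
  have hsig : Summable (fun A : Set E => ∑' x : {x : X // f x = A}, h ↑(e1 ⟨A, x⟩)) :=
    hs'.sigma
  constructor
  · rw [key]; exact tsum_congr inner_eq
  · have : (fun A : Set E => ∑' x : {x : X // f x = A}, h ↑(e1 ⟨A, x⟩)) =
        (fun A : Set E => if A ∈ P.cells then ∑' e : ↥(A ∩ X), h ↑e else 0) := by
      funext A; exact inner_eq A
    exact this ▸ hsig

lemma tsum_part_nonneg (X : Set E) (h : E → ℝ) (hs : Summable fun e : X => h e)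
    (hp : ∀ A ∈ P.cells, (A ∩ X).Nonempty → 0 ≤ ∑' e : ↥(A ∩ X), h ↑e) :
    0 ≤ ∑' e : X, h ↑e := by
  classical
  have hnn : ∀ A : Set E, 0 ≤ (if A ∈ P.cells then ∑' e : ↥(A ∩ X), h ↑e else 0) := by
    intro A
    by_cases hA : A ∈ P.cells
    · rw [if_pos hA]
      rcases Set.eq_empty_or_nonempty (A ∩ X) with he | he
      · rw [he]
        have : IsEmpty (↥(∅ : Set E)) := Set.isEmpty_coe_sort.mpr rfl
        simp [tsum_empty]
      · exact hp A hA he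
    · rw [if_neg hA]
  rw [(DGame.tsum_part P X h hs).1]
  exact tsum_nonneg hnn

lemma tsum_part_pos (X : Set E) (h : E → ℝ) (hs : Summable fun e : X => h e)
    (hp : ∀ A ∈ P.cells, (A ∩ X).Nonempty → 0 ≤ ∑' e : ↥(A ∩ X), h ↑e)
    {A0 : Set E} (hA0 : A0 ∈ P.cells) (hpos : 0 < ∑' e : ↥(A0 ∩ X), h ↑e) :
    0 < ∑' e : X, h ↑e := by
  classical
  have hnn : ∀ A : Set E, 0 ≤ (if A ∈ P.cells then ∑' e : ↥(A ∩ X), h ↑e else 0) := by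
    intro A
    by_cases hA : A ∈ P.cells
    · rw [if_pos hA]
      rcases Set.eq_empty_or_nonempty (A ∩ X) with he | he
      · rw [he]
        have : IsEmpty (↥(∅ : Set E)) := Set.isEmpty_coe_sort.mpr rfl
        simp [tsum_empty]
      · exact hp A hA he
    · rw [if_neg hA]
  obtain ⟨key, hsum⟩ := DGame.tsum_part P X h hs
  rw [key]
  calc (0:ℝ) < ∑' e : ↥(A0 ∩ X), h ↑e := hpos
    _ = (if A0 ∈ P.cells then ∑' e : ↥(A0 ∩ X), h ↑e else 0) := by rw [if_pos hA0]
    _ ≤ _ := Summable.le_tsum hsum A0 (fun B _ => hnn B)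

end DGame

end PartAux
section NuPieces

namespace DGame

variable {E : Type u} (G : DGame E) (P : OPart E)

lemma summable_wc (c : ℝ) (Y : Set E) :
    Summable fun e : Y => G.wd ↑e - c * G.md ↑e :=
  (G.summable_wd_sub Y).sub ((G.summable_md_sub Y).mul_left c)

lemma tsum_wc (c : ℝ) (Y : Set E) :
    ∑' e : Y, (G.wd ↑e - c * G.md ↑e) = G.Wm Y - c * G.Mm Y := by
  rw [Summable.tsum_sub (G.summable_wd_sub Y) ((G.summable_md_sub Y).mul_left c), tsum_mul_left]
  rfl

lemma le_nu_of_pieces {c : ℝ} {X : Set E} (hX : X.Nonempty)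
    (hp : ∀ A ∈ P.cells, (A ∩ X).Nonempty → c ≤ G.nu (A ∩ X)) :
    c ≤ G.nu X := by
  rw [G.le_nu_iff hX]
  have h0 : 0 ≤ ∑' e : X, (G.wd ↑e - c * G.md ↑e) := by
    refine DGame.tsum_part_nonneg P X (fun e => G.wd e - c * G.md e)
      (G.summable_wc c X) (fun A hA hne => ?_)
    rw [G.tsum_wc c (A ∩ X)]
    have := (G.le_nu_iff hne).mp (hp A hA hne)
    linarith
  rw [G.tsum_wc c X] at h0
  linarith

lemma lt_nu_of_pieces {c : ℝ} {X : Set E} (hX : X.Nonempty)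
    (hp : ∀ A ∈ P.cells, (A ∩ X).Nonempty → c ≤ G.nu (A ∩ X))
    {A0 : Set E} (hA0 : A0 ∈ P.cells) (hne0 : (A0 ∩ X).Nonempty)
    (hstrict : c < G.nu (A0 ∩ X)) :
    c < G.nu X := by
  rw [G.lt_nu_iff hX]
  have h0 : 0 < ∑' e : X, (G.wd ↑e - c * G.md ↑e) := by
    refine DGame.tsum_part_pos P X (fun e => G.wd e - c * G.md e)
      (G.summable_wc c X) (fun A hA hne => ?_) hA0 ?_
    · rw [G.tsum_wc c (A ∩ X)]
      have := (G.le_nu_iff hne).mp (hp A hA hne)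
      linarith
    · rw [G.tsum_wc c (A0 ∩ X)]
      have := (G.lt_nu_iff hne0).mp hstrict
      linarith
  rw [G.tsum_wc c X] at h0
  linarith

lemma nu_le_of_pieces {c : ℝ} {X : Set E} (hX : X.Nonempty)
    (hp : ∀ A ∈ P.cells, (A ∩ X).Nonempty → G.nu (A ∩ X) ≤ c) :
    G.nu X ≤ c := by
  rw [G.nu_le_iff hX]
  have h0 : 0 ≤ ∑' e : X, (c * G.md ↑e - G.wd ↑e) := by
    refine DGame.tsum_part_nonneg P X (fun e => c * G.md e - G.wd e)
      (((G.summable_md_sub X).mul_left c).sub (G.summable_wd_sub X)) (fun A hA hne => ?_)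
    have heq : ∑' e : ↥(A ∩ X), (c * G.md ↑e - G.wd ↑e)
        = -(∑' e : ↥(A ∩ X), (G.wd ↑e - c * G.md ↑e)) := by
      rw [← tsum_neg]; congr 1; funext e; ring
    rw [heq, G.tsum_wc c (A ∩ X)]
    have := (G.nu_le_iff hne).mp (hp A hA hne)
    linarith
  have heq : ∑' e : X, (c * G.md ↑e - G.wd ↑e)
      = -(∑' e : X, (G.wd ↑e - c * G.md ↑e)) := by
    rw [← tsum_neg]; congr 1; funext e; ring
  rw [heq, G.tsum_wc c X] at h0
  linarith

end DGame

end NuPieces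

section Struct

namespace OPart

variable {E : Type u} (P : OPart E)

lemma mem_resid_iff {A : Set E} {e : E} :
    e ∈ resid P A ↔ ∀ B ∈ P.cells, P.le B A → B ≠ A → e ∉ B := by
  constructor
  · intro h B hB hle hne heB
    exact h.2 ⟨B, ⟨hB, hle, hne⟩, heB⟩
  · intro h
    refine ⟨trivial, ?_⟩
    rintro ⟨B, ⟨hB, hle, hne⟩, heB⟩
    exact h B hB hle hne heB

lemma subset_resid_self {A : Set E} (hA : A ∈ P.cells) : A ⊆ resid P A := by
  intro e he
  rw [mem_resid_iff]
  intro B hB _ hne heB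
  exact hne (P.cell_unique hB hA heB he)

lemma le_cellOf_of_mem_resid {A : Set E} (hA : A ∈ P.cells) {e : E}
    (he : e ∈ resid P A) : P.le A (P.cellOf e) := by
  by_contra h
  have hB := P.cellOf_mem_cells e
  rcases P.le_total A hA _ hB with h' | h'
  · exact h h'
  · have hne : P.cellOf e ≠ A := by
      rintro rfl
      exact h (P.le_refl _ hB)
    exact (mem_resid_iff P).mp he _ hB h' hne (P.mem_cellOf e)

lemma le_of_mem_resid {A B : Set E} (hA : A ∈ P.cells) (hB : B ∈ P.cells) {e : E}
    (he : e ∈ resid P A) (heB : e ∈ B) : P.le A B := by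
  have := P.le_cellOf_of_mem_resid hA he
  rwa [P.cellOf_eq hB heB] at this

end OPart

end Struct
section Directions

namespace DGame

variable {E : Type u} (G : DGame E) (P : OPart E)

lemma crl2_forward (hC : Crl2Conds G P) :
    ∀ A ∈ P.cells,
      G.IsLCS (resid P A) A ∧
      (∀ L : Set E, G.IsLCS (resid P A) L → G.xi A ≤ G.xi L) ∧
      (∀ L : Set E, G.IsLCS (resid P A) L → G.xi L = G.xi A → L ⊆ A) := by
  obtain ⟨h1, h2, h3⟩ := hC
  intro A hA
  have hALCS : G.IsLCS (resid P A) A := by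
    refine ⟨P.cells_nonempty A hA, P.subset_resid_self hA, ?_⟩
    intro e he e' he' hr
    have hB := P.cellOf_mem_cells e'
    have hle : P.le (P.cellOf e') A := h2 _ hB A hA e' (P.mem_cellOf e') e he hr
    have hge : P.le A (P.cellOf e') := P.le_cellOf_of_mem_resid hA he'
    have heq : P.cellOf e' = A := P.le_antisymm _ hB A hA hle hge
    rw [← heq]; exact P.mem_cellOf e'
  have hpiece : ∀ L : Set E, G.IsLCS (resid P A) L →
      ∀ B ∈ P.cells, (B ∩ L).Nonempty →
        G.nu A ≤ G.nu (B ∩ L) ∧ (B ≠ A → G.nu A < G.nu (B ∩ L)) := by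
    intro L hL B hB hne
    obtain ⟨e0, he0B, he0L⟩ := hne
    have he0r : e0 ∈ resid P A := hL.2.1 he0L
    have hAB : P.le A B := P.le_of_mem_resid hA hB he0r he0B
    have hBr : B ⊆ resid P A := by
      intro x hx
      rw [OPart.mem_resid_iff]
      intro C hC hCA hCneA hxC
      have : C = B := P.cell_unique hC hB hxC hx
      subst this
      exact hCneA (P.le_antisymm C hB A hA hCA hAB)
    have hBLCS : G.IsLCS B (B ∩ L) := by
      refine ⟨⟨e0, he0B, he0L⟩, Set.inter_subset_left, ?_⟩
      rintro e ⟨heB, heL⟩ e' he'B hr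
      exact ⟨he'B, hL.2.2 e heL e' (hBr he'B) hr⟩
    have hxBL : G.nu B ≤ G.nu (B ∩ L) :=
      (G.xi_le_iff B (B ∩ L)).mp (h3 B hB (B ∩ L) hBLCS)
    constructor
    · rcases eq_or_ne B A with rfl | hBA
      · exact hxBL
      · have : G.nu A < G.nu B := (G.xi_lt_iff A B).mp (h1 A hA B hB hAB (Ne.symm hBA))
        linarith
    · intro hBA
      have : G.nu A < G.nu B := (G.xi_lt_iff A B).mp (h1 A hA B hB hAB (Ne.symm hBA))
      linarith
  refine ⟨hALCS, ?_, ?_⟩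
  · intro L hL
    rw [G.xi_le_iff]
    exact G.le_nu_of_pieces P hL.1 (fun B hB hne => (hpiece L hL B hB hne).1)
  · intro L hL hxi e0 he0L
    by_contra he0A
    have hB := P.cellOf_mem_cells e0
    have hBA : P.cellOf e0 ≠ A := fun h => he0A (h ▸ P.mem_cellOf e0)
    have hne : (P.cellOf e0 ∩ L).Nonempty := ⟨e0, P.mem_cellOf e0, he0L⟩
    have hlt : G.nu A < G.nu L :=
      G.lt_nu_of_pieces P hL.1 (fun B hB' hne' => (hpiece L hL B hB' hne').1)
        hB hne ((hpiece L hL _ hB hne).2 hBA)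
    have : G.xi A < G.xi L := (G.xi_lt_iff A L).mpr hlt
    linarith [hxi.ge]

end DGame

end Directions
section Backward

/-- The right-hand side of Theorem 3. -/
def RHS3 {E : Type u} (G : DGame E) (P : OPart E) : Prop :=
  ∀ A ∈ P.cells,
    G.IsLCS (resid P A) A ∧
    (∀ L : Set E, G.IsLCS (resid P A) L → G.xi A ≤ G.xi L) ∧
    (∀ L : Set E, G.IsLCS (resid P A) L → G.xi L = G.xi A → L ⊆ A)

namespace OPart

variable {E : Type u} (P : OPart E)

/-- Union of the cells in the interval `[C, p]`. -/
def UI (C p : Set E) : Set E :=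
  {e | ∃ D, D ∈ P.cells ∧ P.le C D ∧ P.le D p ∧ e ∈ D}

/-- Union of the cells in the interval `[C, p)`. -/
def VI (C p : Set E) : Set E :=
  {e | ∃ D, D ∈ P.cells ∧ P.le C D ∧ P.le D p ∧ D ≠ p ∧ e ∈ D}

lemma subset_UI_left {C p : Set E} (hC : C ∈ P.cells) (hCp : P.le C p) :
    C ⊆ P.UI C p := fun e he => ⟨C, hC, P.le_refl C hC, hCp, he⟩

lemma subset_UI_right {C p : Set E} (hp : p ∈ P.cells) (hCp : P.le C p) :
    p ⊆ P.UI C p := fun e he => ⟨p, hp, hCp, P.le_refl p hp, he⟩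

lemma UI_eq {C p : Set E} (hp : p ∈ P.cells) (hCp : P.le C p) :
    P.UI C p = P.VI C p ∪ p := by
  ext x
  constructor
  · rintro ⟨D, hD, hCD, hDp, hx⟩
    rcases eq_or_ne D p with rfl | hne
    · exact Or.inr hx
    · exact Or.inl ⟨D, hD, hCD, hDp, hne, hx⟩
  · rintro (⟨D, hD, hCD, hDp, _, hx⟩ | hx)
    · exact ⟨D, hD, hCD, hDp, hx⟩
    · exact ⟨p, hp, hCp, P.le_refl p hp, hx⟩

lemma disjoint_VI {C p : Set E} (hp : p ∈ P.cells) : Disjoint (P.VI C p) p := by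
  rw [Set.disjoint_left]
  rintro x ⟨D, hD, _, _, hne, hx⟩ hxp
  exact hne (P.cell_unique hD hp hx hxp)

lemma UI_subset_resid {C p : Set E} (hC : C ∈ P.cells) : P.UI C p ⊆ resid P C := by
  rintro x ⟨D, hD, hCD, hDp, hx⟩
  rw [mem_resid_iff]
  intro C' hC' hC'C hC'ne hxC'
  have hC'D : C' = D := P.cell_unique hC' hD hxC' hx
  subst hC'D
  exact hC'ne (P.le_antisymm C' hC' C hC hC'C hCD)

lemma VI_subset_VI {q C p : Set E} (hq : q ∈ P.cells) (hC : C ∈ P.cells)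
    (hqC : P.le q C) : P.VI C p ⊆ P.VI q p := by
  rintro x ⟨D, hD, hCD, hDp, hne, hx⟩
  exact ⟨D, hD, P.le_trans q hq C hC D hD hqC hCD, hDp, hne, hx⟩

end OPart

namespace DGame

variable {E : Type u} (G : DGame E) (P : OPart E)

lemma Wm_empty : G.Wm (∅ : Set E) = 0 := by
  have : IsEmpty (↥(∅ : Set E)) := Set.isEmpty_coe_sort.mpr rfl
  exact tsum_empty

lemma Mm_empty : G.Mm (∅ : Set E) = 0 := by
  have : IsEmpty (↥(∅ : Set E)) := Set.isEmpty_coe_sort.mpr rfl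
  exact tsum_empty

lemma backward_h2 (hH : RHS3 G P) :
    ∀ A ∈ P.cells, ∀ B ∈ P.cells, ∀ e₁ ∈ A, ∀ e₂ ∈ B, G.r e₁ e₂ → P.le A B := by
  intro A hA B hB e₁ he₁ e₂ he₂ hr
  by_contra hn
  have hne : A ≠ B := by rintro rfl; exact hn (P.le_refl A hA)
  have he₁r : e₁ ∈ resid P B := by
    rw [OPart.mem_resid_iff]
    intro C hC hCB hCne hxC
    have : C = A := P.cell_unique hC hA hxC he₁
    subst this
    exact hn hCB
  have he₁B : e₁ ∈ B := (hH B hB).1.2.2 e₂ he₂ e₁ he₁r hr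
  exact hne (P.cell_unique hA hB he₁ he₁B)

lemma UI_LCS (hH : RHS3 G P) {C p : Set E} (hC : C ∈ P.cells) (hp : p ∈ P.cells)
    (hCp : P.le C p) : G.IsLCS (resid P C) (P.UI C p) := by
  have h2 := G.backward_h2 P hH
  refine ⟨?_, P.UI_subset_resid hC, ?_⟩
  · obtain ⟨e, he⟩ := P.cells_nonempty C hC
    exact ⟨e, P.subset_UI_left hC hCp he⟩
  · rintro e ⟨D, hD, hCD, hDp, heD⟩ e' he' hr
    have hD' := P.cellOf_mem_cells e'
    have h1 : P.le (P.cellOf e') D := h2 _ hD' D hD e' (P.mem_cellOf e') e heD hr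
    have h2' : P.le C (P.cellOf e') := P.le_cellOf_of_mem_resid hC he'
    exact ⟨P.cellOf e', hD', h2', P.le_trans _ hD' D hD p hp h1 hDp, P.mem_cellOf e'⟩

lemma backward_nu_lt (hH : RHS3 G P) {q p : Set E} (hq : q ∈ P.cells) (hp : p ∈ P.cells)
    (hqp : P.le q p) (hne : q ≠ p) : G.nu q < G.nu p := by
  have h2 := G.backward_h2 P hH
  -- the set of posteriors of cells in `[q, p)`
  set T : Set (Set E) := {C | C ∈ P.cells ∧ P.le q C ∧ P.le C p ∧ C ≠ p} with hT
  set S : ℝ := sSup (G.nu '' T) with hS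
  have hqT : q ∈ T := ⟨hq, P.le_refl q hq, hqp, hne⟩
  have hSne : (G.nu '' T).Nonempty := ⟨G.nu q, q, hqT, rfl⟩
  have hSbdd : BddAbove (G.nu '' T) := by
    refine ⟨1, ?_⟩
    rintro x ⟨C, _, rfl⟩
    exact (G.nu_mem C).2
  set α : ℝ := G.nu p with hα
  set Mp : ℝ := G.Mm p with hMp
  have hMp_pos : 0 < Mp := G.Mm_pos (P.cells_nonempty p hp)
  set Mtot : ℝ := G.Mm (P.VI q p) with hMtot
  have hMtot_nonneg : 0 ≤ Mtot := G.Mm_nonneg _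
  -- for every C ∈ T : key inequality
  have hkey : ∀ C ∈ T, G.nu C * (G.Mm (P.VI C p) + Mp) ≤ S * G.Mm (P.VI C p) + α * Mp := by
    rintro C ⟨hC, hqC, hCp, hCne⟩
    have hUlcs := G.UI_LCS P hH hC hp hCp
    have hUne : (P.UI C p).Nonempty := hUlcs.1
    have hnuCU : G.nu C ≤ G.nu (P.UI C p) :=
      (G.xi_le_iff C _).mp ((hH C hC).2.1 _ hUlcs)
    have hsplit : P.UI C p = P.VI C p ∪ p := P.UI_eq hp hCp
    have hdisj : Disjoint (P.VI C p) p := P.disjoint_VI hp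
    have hWU : G.Wm (P.UI C p) = G.Wm (P.VI C p) + G.Wm p := by
      rw [hsplit]; exact G.Wm_union hdisj
    have hMU : G.Mm (P.UI C p) = G.Mm (P.VI C p) + Mp := by
      rw [hsplit]; exact G.Mm_union hdisj
    have hWp : G.Wm p = α * Mp := by
      have := G.nu_eq p
      rw [hα, this]
      exact (div_mul_cancel₀ _ (ne_of_gt hMp_pos)).symm
    have hWV : G.Wm (P.VI C p) ≤ S * G.Mm (P.VI C p) := by
      rcases Set.eq_empty_or_nonempty (P.VI C p) with hV | hV
      · rw [hV, G.Wm_empty, G.Mm_empty]; simp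
      · have hnuV : G.nu (P.VI C p) ≤ S := by
          refine G.nu_le_of_pieces P hV (fun B hB hBne => ?_)
          obtain ⟨x, hxB, hxV⟩ := hBne
          obtain ⟨D, hD, hCD, hDp, hDne, hxD⟩ := hxV
          have hBD : B = D := P.cell_unique hB hD hxB hxD
          subst hBD
          have hBsub : B ⊆ P.VI C p := fun y hy => ⟨B, hB, hCD, hDp, hDne, hy⟩
          have hBint : B ∩ P.VI C p = B := Set.inter_eq_left.mpr hBsub
          rw [hBint]
          have hBT : B ∈ T := ⟨hB, P.le_trans q hq C hC B hB hqC hCD, hDp, hDne⟩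
          exact le_csSup hSbdd ⟨B, hBT, rfl⟩
        exact (G.nu_le_iff hV).mp hnuV
    have hineq := (G.le_nu_iff hUne).mp hnuCU
    rw [hMU, hWU, hWp] at hineq
    nlinarith [hWV]
  -- Step A : S ≤ α
  have hSα : S ≤ α := by
    by_contra hcon
    push_neg at hcon
    set ε : ℝ := (S - α) * Mp / (Mp + Mtot) with hε
    have hden : (0:ℝ) < Mp + Mtot := by linarith
    have hε_pos : 0 < ε := by
      apply div_pos _ hden
      nlinarith
    have hε_eq : ε * (Mtot + Mp) = (S - α) * Mp := by
      rw [hε, add_comm Mtot Mp]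
      exact div_mul_cancel₀ _ (ne_of_gt hden)
    obtain ⟨s, hsmem, hslt⟩ := exists_lt_of_lt_csSup hSne (show S - ε < S by linarith)
    obtain ⟨C, hCT, rfl⟩ := hsmem
    have hnuCS : G.nu C ≤ S := le_csSup hSbdd ⟨C, hCT, rfl⟩
    have hkC := hkey C hCT
    have hMV : G.Mm (P.VI C p) ≤ Mtot :=
      G.Mm_mono (P.VI_subset_VI hq hCT.1 hCT.2.1)
    have hMV_nonneg : 0 ≤ G.Mm (P.VI C p) := G.Mm_nonneg _
    -- derive contradiction
    have h5 : G.nu C * Mp ≤ (S - G.nu C) * G.Mm (P.VI C p) + α * Mp := by nlinarith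
    have h6 : (S - G.nu C) * G.Mm (P.VI C p) ≤ (S - G.nu C) * Mtot :=
      mul_le_mul_of_nonneg_left hMV (by linarith)
    have h7 : (S - G.nu C) * Mtot ≤ ε * Mtot := by
      apply mul_le_mul_of_nonneg_right _ hMtot_nonneg
      linarith
    have h8 : (S - ε) * Mp < G.nu C * Mp :=
      mul_lt_mul_of_pos_right hslt hMp_pos
    nlinarith
  -- Step B : ν q < α
  have hup : ∀ D ∈ P.cells, P.le q D → P.le D p → G.nu D ≤ α := by
    intro D hD hqD hDp
    rcases eq_or_ne D p with rfl | hDne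
    · exact le_rfl
    · exact le_trans (le_csSup hSbdd ⟨D, ⟨hD, hqD, hDp, hDne⟩, rfl⟩) hSα
  have hUlcs := G.UI_LCS P hH hq hp hqp
  have hUne : (P.UI q p).Nonempty := hUlcs.1
  have hq_le_U : G.xi q ≤ G.xi (P.UI q p) := (hH q hq).2.1 _ hUlcs
  have hUnotsub : ¬ P.UI q p ⊆ q := by
    intro hsub
    obtain ⟨e, he⟩ := P.cells_nonempty p hp
    have heU : e ∈ P.UI q p := P.subset_UI_right hp hqp he
    exact Set.disjoint_left.mp (P.disj p hp q hq (Ne.symm hne)) he (hsub heU)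
  have hstrict : G.xi q < G.xi (P.UI q p) := by
    rcases lt_or_eq_of_le hq_le_U with h | h
    · exact h
    · exact absurd ((hH q hq).2.2 _ hUlcs h.symm) hUnotsub
  have hnuU : G.nu (P.UI q p) ≤ α := by
    refine G.nu_le_of_pieces P hUne (fun B hB hBne => ?_)
    obtain ⟨x, hxB, hxU⟩ := hBne
    obtain ⟨D, hD, hqD, hDp, hxD⟩ := hxU
    have hBD : B = D := P.cell_unique hB hD hxB hxD
    subst hBD
    have hBsub : B ⊆ P.UI q p := fun y hy => ⟨B, hB, hqD, hDp, hy⟩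
    rw [Set.inter_eq_left.mpr hBsub]
    exact hup B hB hqD hDp
  calc G.nu q < G.nu (P.UI q p) := (G.xi_lt_iff _ _).mp hstrict
    _ ≤ α := hnuU

lemma crl2_backward (hH : RHS3 G P) : Crl2Conds G P := by
  refine ⟨?_, G.backward_h2 P hH, ?_⟩
  · intro A hA B hB hAB hne
    exact (G.xi_lt_iff A B).mpr (G.backward_nu_lt P hH hA hB hAB hne)
  · intro A hA L hL
    have h2 := G.backward_h2 P hH
    have hLr : G.IsLCS (resid P A) L := by
      refine ⟨hL.1, fun x hx => P.subset_resid_self hA (hL.2.1 hx), ?_⟩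
      intro e he e' he' hr
      have hB := P.cellOf_mem_cells e'
      have hle : P.le (P.cellOf e') A := h2 _ hB A hA e' (P.mem_cellOf e') e (hL.2.1 he) hr
      have hge : P.le A (P.cellOf e') := P.le_cellOf_of_mem_resid hA he'
      have heq : P.cellOf e' = A := P.le_antisymm _ hB A hA hle hge
      exact hL.2.2 e he e' (heq ▸ P.mem_cellOf e') hr
    exact (hH A hA).2.1 L hLr

end DGame

end Backward
/-- Theorem 3: an ordered partition satisfies the Corollary-2 conditions iff
every cell `A` is the largest lower contour set minimizing `ξ` in
`E_A = E \ ⋃{A' : A' <_P A}`. -/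
theorem stmt_6 {E : Type u} [Countable E] (G : DGame E) (P : OPart E) :
    Crl2Conds G P ↔
      ∀ A ∈ P.cells,
        G.IsLCS (resid P A) A ∧
        (∀ L : Set E, G.IsLCS (resid P A) L → G.xi A ≤ G.xi L) ∧
        (∀ L : Set E, G.IsLCS (resid P A) L → G.xi L = G.xi A → L ⊆ A) := by
  exact ⟨fun h => G.crl2_forward P h, fun h => G.crl2_backward P h⟩
end

section
/- Lemma A.5: In any disclosure game, let A ⊆ E be nonempty and suppose the minimization problem min_L ξ(L), over all lower contour sets L in A, admits a minimizer. Then it has a largest minimizer: there is a lower contour set L* in A minimizing ξ such that every lower contour set in A minimizing ξ is contained in L*. -/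
open scoped BigOperators

universe u

namespace LemA5

open Set

variable {E : Type u} (G : DGame E)

noncomputable def gA (S : Set E) : ℝ := ∑' e : S, G.FG e
noncomputable def bA (S : Set E) : ℝ := ∑' e : S, G.FB e

lemma summG (S : Set E) : Summable (G.FG ∘ (Subtype.val : S → E)) :=
  G.FG_hasSum.summable.subtype S

lemma summB (S : Set E) : Summable (G.FB ∘ (Subtype.val : S → E)) :=
  G.FB_hasSum.summable.subtype S

lemma gA_nonneg (S : Set E) : 0 ≤ gA G S := tsum_nonneg fun e => G.FG_nonneg e

lemma bA_nonneg (S : Set E) : 0 ≤ bA G S := tsum_nonneg fun e => G.FB_nonneg e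

lemma gA_mono {S T : Set E} (h : S ⊆ T) : gA G S ≤ gA G T := by
  rw [gA, gA, tsum_subtype, tsum_subtype]
  exact Summable.tsum_le_tsum
    (fun e => Set.indicator_le_indicator_of_subset h (fun a => G.FG_nonneg a) e)
    (G.FG_hasSum.summable.indicator S) (G.FG_hasSum.summable.indicator T)

lemma bA_mono {S T : Set E} (h : S ⊆ T) : bA G S ≤ bA G T := by
  rw [bA, bA, tsum_subtype, tsum_subtype]
  exact Summable.tsum_le_tsum
    (fun e => Set.indicator_le_indicator_of_subset h (fun a => G.FB_nonneg a) e)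
    (G.FB_hasSum.summable.indicator S) (G.FB_hasSum.summable.indicator T)

lemma gA_union {S T : Set E} (hd : Disjoint S T) : gA G (S ∪ T) = gA G S + gA G T :=
  Summable.tsum_union_disjoint hd (summG G S) (summG G T)

lemma bA_union {S T : Set E} (hd : Disjoint S T) : bA G (S ∪ T) = bA G S + bA G T :=
  Summable.tsum_union_disjoint hd (summB G S) (summB G T)

lemma nu_eq (S : Set E) :
    G.nu S = gA G S * G.π0 / (gA G S * G.π0 + bA G S * (1 - G.π0)) := rfl

lemma den_pos {S : Set E} (hS : S.Nonempty) :
    0 < gA G S * G.π0 + bA G S * (1 - G.π0) := by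
  obtain ⟨e, he⟩ := hS
  have h1 : G.FG e ≤ gA G S := Summable.le_tsum (summG G S) ⟨e, he⟩ (fun j _ => G.FG_nonneg j)
  have h2 : G.FB e ≤ bA G S := Summable.le_tsum (summB G S) ⟨e, he⟩ (fun j _ => G.FB_nonneg j)
  have h3 := G.FGB_pos e
  have h4 := G.FG_nonneg e
  have h5 := G.FB_nonneg e
  have h6 := G.π0_pos
  have h7 := G.π0_lt_one
  have h8 : G.FG e * G.π0 ≤ gA G S * G.π0 := mul_le_mul_of_nonneg_right h1 h6.le
  have h9 : G.FB e * (1 - G.π0) ≤ bA G S * (1 - G.π0) :=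
    mul_le_mul_of_nonneg_right h2 (by linarith)
  rcases h4.lt_or_eq with hFG | hFG
  · nlinarith [mul_pos hFG h6, mul_nonneg h5 (by linarith : (0:ℝ) ≤ 1 - G.π0)]
  · have hFB : 0 < G.FB e := by linarith
    nlinarith [mul_pos hFB (by linarith : (0:ℝ) < 1 - G.π0), mul_nonneg h4 h6.le]

lemma nu_mem_Icc {S : Set E} (hS : S.Nonempty) : G.nu S ∈ Set.Icc (0 : ℝ) 1 := by
  have hd := den_pos G hS
  have hx : 0 ≤ gA G S * G.π0 := mul_nonneg (gA_nonneg G S) G.π0_pos.le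
  have hy : 0 ≤ bA G S * (1 - G.π0) :=
    mul_nonneg (bA_nonneg G S) (by linarith [G.π0_lt_one])
  rw [nu_eq]
  constructor
  · exact div_nonneg hx hd.le
  · rw [div_le_one hd]; linarith

end LemA5

/-- Lemma A.5: if the problem of minimizing `ξ` over lower contour sets in `A`
admits a minimizer, then it has a largest minimizer. -/
theorem stmt_8 {E : Type u} [Countable E] (G : DGame E) (A : Set E) (hA : A.Nonempty)
    (h : ∃ L : Set E, G.IsLCS A L ∧ ∀ L' : Set E, G.IsLCS A L' → G.xi L ≤ G.xi L') :
    ∃ Lstar : Set E, G.IsLCS A Lstar ∧ (∀ L' : Set E, G.IsLCS A L' → G.xi Lstar ≤ G.xi L') ∧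
      ∀ L' : Set E, G.IsLCS A L' → (∀ L'' : Set E, G.IsLCS A L'' → G.xi L' ≤ G.xi L'') →
        L' ⊆ Lstar := by
  classical
  obtain ⟨L0, hL0, hmin0⟩ := h
  set m := G.nu L0 with hm
  have hnuIcc : ∀ L : Set E, G.IsLCS A L → G.nu L ∈ Set.Icc (0 : ℝ) 1 :=
    fun L hL => LemA5.nu_mem_Icc G hL.1
  have hximono : ∀ L L' : Set E, G.IsLCS A L → G.IsLCS A L' →
      (G.xi L ≤ G.xi L' ↔ G.nu L ≤ G.nu L') :=
    fun L L' hL hL' => G.φ_mono.le_iff_le (hnuIcc L hL) (hnuIcc L' hL')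
  have hge : ∀ L : Set E, G.IsLCS A L → m ≤ G.nu L :=
    fun L hL => (hximono L0 L hL0 hL).mp (hmin0 L hL)
  have hm0 : 0 ≤ m := (hnuIcc L0 hL0).1
  have hm1 : m ≤ 1 := (hnuIcc L0 hL0).2
  set M : Set (Set E) := {L | G.IsLCS A L ∧ G.nu L = m} with hMdef
  have hL0M : L0 ∈ M := ⟨hL0, rfl⟩
  -- union of two minimizers is a minimizer
  have hunion : ∀ L1 ∈ M, ∀ L2 ∈ M, L1 ∪ L2 ∈ M := by
    intro L1 h1 L2 h2
    have hLCS : G.IsLCS A (L1 ∪ L2) := by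
      refine ⟨h1.1.1.mono Set.subset_union_left,
        Set.union_subset h1.1.2.1 h2.1.2.1, ?_⟩
      intro e he e' he' hr
      rcases he with he | he
      · exact Or.inl (h1.1.2.2 e he e' he' hr)
      · exact Or.inr (h2.1.2.2 e he e' he' hr)
    refine ⟨hLCS, le_antisymm ?_ (hge _ hLCS)⟩
    by_cases hsub : L2 ⊆ L1
    · rw [Set.union_eq_self_of_subset_right hsub]; exact le_of_eq h1.2
    · set T : Set E := L2 \ L1 with hTdef
      have hTne : T.Nonempty := Set.diff_nonempty.mpr hsub
      have hdT : 0 < LemA5.gA G T * G.π0 + LemA5.bA G T * (1 - G.π0) :=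
        LemA5.den_pos G hTne
      -- the "difference part" has ratio at most m
      have hratT : LemA5.gA G T * G.π0 ≤
          m * (LemA5.gA G T * G.π0 + LemA5.bA G T * (1 - G.π0)) := by
        by_cases hI : (L2 ∩ L1).Nonempty
        · -- intersection is an LCS, so its ratio is ≥ m
          have hILCS : G.IsLCS A (L2 ∩ L1) := by
            refine ⟨hI, (Set.inter_subset_left).trans h2.1.2.1, ?_⟩
            intro e he e' he' hr
            exact ⟨h2.1.2.2 e he.1 e' he' hr, h1.1.2.2 e he.2 e' he' hr⟩
          have hdI : 0 < LemA5.gA G (L2 ∩ L1) * G.π0 +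
              LemA5.bA G (L2 ∩ L1) * (1 - G.π0) := LemA5.den_pos G hI
          have hIge : m * (LemA5.gA G (L2 ∩ L1) * G.π0 +
              LemA5.bA G (L2 ∩ L1) * (1 - G.π0)) ≤ LemA5.gA G (L2 ∩ L1) * G.π0 := by
            have := hge _ hILCS
            rw [LemA5.nu_eq, le_div_iff₀ hdI] at this
            exact this
          have hdisj : Disjoint (L2 ∩ L1) T :=
            Set.disjoint_left.mpr (fun x hx hx2 => hx2.2 hx.2)
          have hsplit : (L2 ∩ L1) ∪ T = L2 := Set.inter_union_diff L2 L1
          have hg2 : LemA5.gA G L2 = LemA5.gA G (L2 ∩ L1) + LemA5.gA G T := by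
            have hh := LemA5.gA_union G hdisj; rw [hsplit] at hh; exact hh
          have hb2 : LemA5.bA G L2 = LemA5.bA G (L2 ∩ L1) + LemA5.bA G T := by
            have hh := LemA5.bA_union G hdisj; rw [hsplit] at hh; exact hh
          have hd2 : 0 < LemA5.gA G L2 * G.π0 + LemA5.bA G L2 * (1 - G.π0) :=
            LemA5.den_pos G h2.1.1
          have hL2eq : LemA5.gA G L2 * G.π0 =
              m * (LemA5.gA G L2 * G.π0 + LemA5.bA G L2 * (1 - G.π0)) := by
            have := h2.2
            rw [LemA5.nu_eq, div_eq_iff (ne_of_gt hd2)] at this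
            linarith [this]
          rw [hg2, hb2] at hL2eq
          nlinarith [hIge, hL2eq]
        · -- intersection empty: T = L2
          have hTL2 : T = L2 :=
            Set.Subset.antisymm Set.diff_subset
              (fun x hx => ⟨hx, fun hx1 => hI ⟨x, hx, hx1⟩⟩)
          have hd2 : 0 < LemA5.gA G L2 * G.π0 + LemA5.bA G L2 * (1 - G.π0) :=
            LemA5.den_pos G h2.1.1
          have hL2eq : LemA5.gA G L2 * G.π0 =
              m * (LemA5.gA G L2 * G.π0 + LemA5.bA G L2 * (1 - G.π0)) := by
            have := h2.2
            rw [LemA5.nu_eq, div_eq_iff (ne_of_gt hd2)] at this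
            linarith [this]
          rw [hTL2]
          linarith [hL2eq]
      -- now combine L1 and T
      have hdisj1 : Disjoint L1 T := Set.disjoint_left.mpr (fun x hx hx2 => hx2.2 hx)
      have hU : L1 ∪ T = L1 ∪ L2 := Set.union_diff_self
      have hd1 : 0 < LemA5.gA G L1 * G.π0 + LemA5.bA G L1 * (1 - G.π0) :=
        LemA5.den_pos G h1.1.1
      have hL1eq : LemA5.gA G L1 * G.π0 =
          m * (LemA5.gA G L1 * G.π0 + LemA5.bA G L1 * (1 - G.π0)) := by
        have := h1.2
        rw [LemA5.nu_eq, div_eq_iff (ne_of_gt hd1)] at this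
        linarith [this]
      have hgU : LemA5.gA G (L1 ∪ L2) = LemA5.gA G L1 + LemA5.gA G T := by
        rw [← hU]; exact LemA5.gA_union G hdisj1
      have hbU : LemA5.bA G (L1 ∪ L2) = LemA5.bA G L1 + LemA5.bA G T := by
        rw [← hU]; exact LemA5.bA_union G hdisj1
      have hdU : 0 < LemA5.gA G (L1 ∪ L2) * G.π0 + LemA5.bA G (L1 ∪ L2) * (1 - G.π0) :=
        LemA5.den_pos G hLCS.1
      rw [LemA5.nu_eq, div_le_iff₀ hdU, hgU, hbU]
      nlinarith [hL1eq, hratT]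
  -- finite unions of minimizers
  have hfin : ∀ s : Finset E, (∀ e ∈ s, ∃ L ∈ M, e ∈ L) → ∃ K ∈ M, ∀ e ∈ s, e ∈ K := by
    intro s
    induction s using Finset.induction_on with
    | empty => intro _; exact ⟨L0, hL0M, by simp⟩
    | @insert a s ha ih =>
      intro hall
      obtain ⟨K, hKM, hKall⟩ := ih (fun e he => hall e (Finset.mem_insert_of_mem he))
      obtain ⟨La, hLaM, haLa⟩ := hall a (Finset.mem_insert_self a s)
      refine ⟨K ∪ La, hunion K hKM La hLaM, ?_⟩
      intro e he
      rcases Finset.mem_insert.mp he with rfl | he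
      · exact Or.inr haLa
      · exact Or.inl (hKall e he)
  set Lstar : Set E := ⋃₀ M with hLs
  have hLCSstar : G.IsLCS A Lstar := by
    refine ⟨⟨hL0.1.some, Set.mem_sUnion.mpr ⟨L0, hL0M, hL0.1.some_mem⟩⟩,
      Set.sUnion_subset (fun L hL => hL.1.2.1), ?_⟩
    intro e he e' he' hr
    obtain ⟨L, hLM, heL⟩ := Set.mem_sUnion.mp he
    exact Set.mem_sUnion.mpr ⟨L, hLM, hLM.1.2.2 e heL e' he' hr⟩
  -- approximation of gA Lstar by minimizers
  have happ : ∀ ε : ℝ, 0 < ε → ∃ K ∈ M, K ⊆ Lstar ∧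
      LemA5.gA G Lstar ≤ LemA5.gA G K + ε := by
    intro ε hε
    have hsm : Summable (G.FG ∘ (Subtype.val : Lstar → E)) := LemA5.summG G Lstar
    have ht : Filter.Tendsto (fun s : Finset ↥Lstar => ∑ b ∈ s, (G.FG ∘ Subtype.val) b)
        Filter.atTop (nhds (LemA5.gA G Lstar)) := hsm.hasSum
    have hev := ht.eventually (eventually_gt_nhds
      (show LemA5.gA G Lstar - ε < LemA5.gA G Lstar by linarith))
    obtain ⟨s, hs⟩ := hev.exists
    set F : Finset E := s.image Subtype.val with hF
    have hFsub : ∀ e ∈ F, ∃ L ∈ M, e ∈ L := by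
      intro e he
      obtain ⟨b, hb, rfl⟩ := Finset.mem_image.mp he
      exact Set.mem_sUnion.mp b.2
    obtain ⟨K, hKM, hKall⟩ := hfin F hFsub
    have hsumF : ∑ e ∈ F, G.FG e = ∑ b ∈ s, G.FG ↑b :=
      Finset.sum_image (fun x _ y _ hxy => Subtype.ext hxy)
    have hle : ∑ e ∈ F, G.FG e ≤ LemA5.gA G K := by
      have h1 : ∑ e ∈ F, Set.indicator K G.FG e ≤ ∑' e, Set.indicator K G.FG e :=
        Summable.sum_le_tsum F (fun i _ => Set.indicator_nonneg (fun a _ => G.FG_nonneg a) i)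
          (G.FG_hasSum.summable.indicator K)
      have h2 : ∑ e ∈ F, Set.indicator K G.FG e = ∑ e ∈ F, G.FG e :=
        Finset.sum_congr rfl (fun e he => Set.indicator_of_mem (hKall e he) _)
      rw [LemA5.gA, tsum_subtype]
      linarith
    refine ⟨K, hKM, Set.subset_sUnion_of_mem hKM, ?_⟩
    have : LemA5.gA G Lstar - ε < ∑ b ∈ s, G.FG ↑b := hs
    linarith [hle, hsumF.ge, hsumF.le]
  -- ν(Lstar) ≤ m
  have hnustar : G.nu Lstar ≤ m := by
    have hdpos := LemA5.den_pos G hLCSstar.1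
    rw [LemA5.nu_eq, div_le_iff₀ hdpos]
    refine le_of_forall_pos_le_add (fun ε hε => ?_)
    obtain ⟨K, hKM, hKsub, hKg⟩ := happ ε hε
    have hdK : 0 < LemA5.gA G K * G.π0 + LemA5.bA G K * (1 - G.π0) :=
      LemA5.den_pos G hKM.1.1
    have hKeq : LemA5.gA G K * G.π0 =
        m * (LemA5.gA G K * G.π0 + LemA5.bA G K * (1 - G.π0)) := by
      have := hKM.2
      rw [LemA5.nu_eq, div_eq_iff (ne_of_gt hdK)] at this
      linarith [this]
    have hgm : LemA5.gA G K ≤ LemA5.gA G Lstar := LemA5.gA_mono G hKsub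
    have hbm : LemA5.bA G K ≤ LemA5.bA G Lstar := LemA5.bA_mono G hKsub
    have hπ0 := G.π0_pos
    have hπ1 := G.π0_lt_one
    have hden_mono : LemA5.gA G K * G.π0 + LemA5.bA G K * (1 - G.π0) ≤
        LemA5.gA G Lstar * G.π0 + LemA5.bA G Lstar * (1 - G.π0) := by
      have := mul_le_mul_of_nonneg_right hgm hπ0.le
      have := mul_le_mul_of_nonneg_right hbm (by linarith : (0:ℝ) ≤ 1 - G.π0)
      linarith
    have h2 : m * (LemA5.gA G K * G.π0 + LemA5.bA G K * (1 - G.π0)) ≤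
        m * (LemA5.gA G Lstar * G.π0 + LemA5.bA G Lstar * (1 - G.π0)) :=
      mul_le_mul_of_nonneg_left hden_mono hm0
    have h3 : LemA5.gA G Lstar * G.π0 ≤ LemA5.gA G K * G.π0 + ε * G.π0 := by
      have := mul_le_mul_of_nonneg_right hKg hπ0.le
      linarith [this]
    have h4 : ε * G.π0 ≤ ε := by nlinarith
    linarith
  -- conclude
  have hxile : ∀ L' : Set E, G.IsLCS A L' → G.xi Lstar ≤ G.xi L' := by
    intro L' hL'
    exact (hximono Lstar L' hLCSstar hL').mpr (le_trans hnustar (hge L' hL'))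
  refine ⟨Lstar, hLCSstar, hxile, ?_⟩
  intro L' hL' hminL'
  have hL'M : L' ∈ M := by
    refine ⟨hL', ?_⟩
    have h1 : G.xi L' ≤ G.xi L0 := hminL' L0 hL0
    have h2 : G.xi L0 ≤ G.xi L' := hmin0 L' hL'
    exact G.φ_mono.injOn (hnuIcc L' hL') (hnuIcc L0 hL0) (le_antisymm h1 h2)
  exact Set.subset_sUnion_of_mem hL'M
end

section
/- Lemma A.6: In any disclosure game, let A ⊆ E be nonempty with finitely many minimal elements. Then the minimization problem min_L ξ(L), over all lower contour sets L in A, admits a minimizer, and it has a largest minimizer (a minimizer containing every other minimizer). -/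
open scoped BigOperators

universe u

/-- The set of minimal elements of `A`. -/
def MinimalsIn {E : Type u} (r : E → E → Prop) (A : Set E) : Set E :=
  {e | e ∈ A ∧ ∀ e' ∈ A, r e' e → r e e'}


namespace LemA6

open Classical

variable {E : Type u} (G : DGame E)

/-- sum of FG over a set, as a tsum of the indicator. -/
noncomputable def sG (s : Set E) : ℝ := ∑' e, s.indicator G.FG e
noncomputable def sB (s : Set E) : ℝ := ∑' e, s.indicator G.FB e
noncomputable def nmA (s : Set E) : ℝ := sG G s * G.π0
noncomputable def dnA (s : Set E) : ℝ := sG G s * G.π0 + sB G s * (1 - G.π0)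

lemma summG : Summable G.FG := G.FG_hasSum.summable
lemma summB : Summable G.FB := G.FB_hasSum.summable

lemma nu_eq (s : Set E) : G.nu s = nmA G s / dnA G s := by
  unfold DGame.nu nmA dnA sG sB
  rw [tsum_subtype, tsum_subtype]

lemma sG_nonneg (s : Set E) : 0 ≤ sG G s :=
  tsum_nonneg fun e => Set.indicator_nonneg (fun x _ => G.FG_nonneg x) e

lemma sB_nonneg (s : Set E) : 0 ≤ sB G s :=
  tsum_nonneg fun e => Set.indicator_nonneg (fun x _ => G.FB_nonneg x) e

lemma nmA_nonneg (s : Set E) : 0 ≤ nmA G s :=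
  mul_nonneg (sG_nonneg G s) G.π0_pos.le

lemma nmA_le_dnA (s : Set E) : nmA G s ≤ dnA G s := by
  have : 0 ≤ sB G s * (1 - G.π0) :=
    mul_nonneg (sB_nonneg G s) (by linarith [G.π0_lt_one])
  unfold nmA dnA; linarith

lemma dnA_pos {s : Set E} (hs : s.Nonempty) : 0 < dnA G s := by
  obtain ⟨e, he⟩ := hs
  have hG : G.FG e ≤ sG G s := by
    have := Summable.le_tsum ((summG G).indicator s) e
      (fun j _ => Set.indicator_nonneg (fun x _ => G.FG_nonneg x) j)
    rwa [Set.indicator_of_mem he] at this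
  have hB : G.FB e ≤ sB G s := by
    have := Summable.le_tsum ((summB G).indicator s) e
      (fun j _ => Set.indicator_nonneg (fun x _ => G.FB_nonneg x) j)
    rwa [Set.indicator_of_mem he] at this
  have h1 : 0 < G.FG e + G.FB e := G.FGB_pos e
  have hπ : 0 < G.π0 := G.π0_pos
  have hπ' : 0 < 1 - G.π0 := by linarith [G.π0_lt_one]
  have key : 0 < G.FG e * G.π0 + G.FB e * (1 - G.π0) := by
    rcases lt_or_ge 0 (G.FG e) with hg | hg
    · have := mul_pos hg hπ
      nlinarith [mul_nonneg (G.FB_nonneg e) hπ'.le]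
    · have hb : 0 < G.FB e := by nlinarith [G.FG_nonneg e]
      nlinarith [mul_nonneg (G.FG_nonneg e) hπ.le, mul_pos hb hπ']
  unfold dnA
  nlinarith [mul_le_mul_of_nonneg_right hG hπ.le, mul_le_mul_of_nonneg_right hB hπ'.le]

lemma sG_union {s t : Set E} (h : Disjoint s t) : sG G (s ∪ t) = sG G s + sG G t := by
  unfold sG
  rw [← Summable.tsum_add ((summG G).indicator s) ((summG G).indicator t)]
  exact tsum_congr fun e => by rw [Set.indicator_union_of_disjoint h]

lemma sB_union {s t : Set E} (h : Disjoint s t) : sB G (s ∪ t) = sB G s + sB G t := by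
  unfold sB
  rw [← Summable.tsum_add ((summB G).indicator s) ((summB G).indicator t)]
  exact tsum_congr fun e => by rw [Set.indicator_union_of_disjoint h]

lemma nmA_union {s t : Set E} (h : Disjoint s t) : nmA G (s ∪ t) = nmA G s + nmA G t := by
  unfold nmA; rw [sG_union G h]; ring

lemma dnA_union {s t : Set E} (h : Disjoint s t) : dnA G (s ∪ t) = dnA G s + dnA G t := by
  unfold dnA; rw [sG_union G h, sB_union G h]; ring

lemma nu_mem_Icc {s : Set E} (hs : s.Nonempty) : G.nu s ∈ Set.Icc (0:ℝ) 1 := by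
  rw [nu_eq]
  constructor
  · exact div_nonneg (nmA_nonneg G s) (dnA_pos G hs).le
  · rw [div_le_one (dnA_pos G hs)]; exact nmA_le_dnA G s

/-! ### The space of Boolean configurations -/

def toSet (f : E → Bool) : Set E := {e | f e = true}

noncomputable def gm (f : E → Bool) : ℝ := sG G (toSet f)
noncomputable def bm (f : E → Bool) : ℝ := sB G (toSet f)

lemma continuous_gm : Continuous (gm G) := by
  unfold gm sG
  refine continuous_tsum (u := G.FG) (fun e => ?_) (summG G) (fun e f => ?_)
  · have : (fun f : E → Bool => (toSet f).indicator G.FG e)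
        = (fun b : Bool => if b = true then G.FG e else 0) ∘ (fun f => f e) := by
      funext f
      by_cases h : f e = true <;>
        simp [toSet, Set.indicator_apply, Set.mem_setOf_eq, h]
    rw [this]
    exact Continuous.comp continuous_of_discreteTopology (continuous_apply e)
  · by_cases h : e ∈ toSet f
    · rw [Set.indicator_of_mem h, Real.norm_eq_abs, abs_of_nonneg (G.FG_nonneg e)]
    · rw [Set.indicator_of_notMem h]; simpa using G.FG_nonneg e

lemma continuous_bm : Continuous (bm G) := by
  unfold bm sB
  refine continuous_tsum (u := G.FB) (fun e => ?_) (summB G) (fun e f => ?_)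
  · have : (fun f : E → Bool => (toSet f).indicator G.FB e)
        = (fun b : Bool => if b = true then G.FB e else 0) ∘ (fun f => f e) := by
      funext f
      by_cases h : f e = true <;>
        simp [toSet, Set.indicator_apply, Set.mem_setOf_eq, h]
    rw [this]
    exact Continuous.comp continuous_of_discreteTopology (continuous_apply e)
  · by_cases h : e ∈ toSet f
    · rw [Set.indicator_of_mem h, Real.norm_eq_abs, abs_of_nonneg (G.FB_nonneg e)]
    · rw [Set.indicator_of_notMem h]; simpa using G.FB_nonneg e

lemma continuous_nmA : Continuous (fun f : E → Bool => nmA G (toSet f)) :=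
  (continuous_gm G).mul continuous_const

lemma continuous_dnA : Continuous (fun f : E → Bool => dnA G (toSet f)) :=
  ((continuous_gm G).mul continuous_const).add ((continuous_bm G).mul continuous_const)

/-- every element of `A` has a minimal element of `A` below it -/
lemma exists_minimal_le (A : Set E) {e : E} (he : e ∈ A) :
    ∃ w ∈ MinimalsIn G.r A, G.r w e := by
  by_contra hcon
  push_neg at hcon
  have H : ∀ w : {w : E // w ∈ A ∧ G.r w e},
      ∃ w' : {w : E // w ∈ A ∧ G.r w e}, G.r w'.1 w.1 ∧ ¬ G.r w.1 w'.1 := by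
    rintro ⟨w, hwA, hwe⟩
    have hnm : w ∉ MinimalsIn G.r A := fun hm => hcon w hm hwe
    simp only [MinimalsIn, Set.mem_setOf_eq, not_and, not_forall] at hnm
    obtain ⟨w', hw'A, hr, hnr⟩ := hnm hwA
    exact ⟨⟨w', hw'A, G.r_trans hr hwe⟩, hr, hnr⟩
  choose step hstep1 hstep2 using H
  set f : ℕ → {w : E // w ∈ A ∧ G.r w e} := fun n => step^[n] ⟨e, he, G.r_refl e⟩ with hf
  have hchain : ∀ n, G.r ((f (n+1)).1) ((f n).1) := by
    intro n
    have : f (n+1) = step (f n) := Function.iterate_succ_apply' step n _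
    rw [this]; exact hstep1 (f n)
  obtain ⟨N, hN⟩ := G.a4 (fun n => (f n).1) hchain
  have h1 : G.r ((f N).1) ((f (N+1)).1) := hN (N+1) (Nat.le_succ N)
  have h2 : f (N+1) = step (f N) := Function.iterate_succ_apply' step N _
  exact hstep2 (f N) (by rw [← h2]; exact h1)

/-- the set of configurations whose `toSet` is a nonempty LCS in `A` -/
def K (A : Set E) : Set (E → Bool) :=
  {f | (∀ e, f e = true → e ∈ A) ∧
       (∀ e e', f e = true → e' ∈ A → G.r e' e → f e' = true) ∧
       (∃ w ∈ MinimalsIn G.r A, f w = true)}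

lemma isLCS_of_mem_K {A : Set E} {f : E → Bool} (hf : f ∈ K G A) :
    G.IsLCS A (toSet f) := by
  obtain ⟨h1, h2, w, _, hw⟩ := hf
  exact ⟨⟨w, hw⟩, fun e he => h1 e he, fun e he e' he' hr => h2 e e' he he' hr⟩

lemma mem_K_of_isLCS {A L : Set E} (hL : G.IsLCS A L) :
    (fun e => decide (e ∈ L)) ∈ K G A ∧ toSet (fun e => decide (e ∈ L)) = L := by
  obtain ⟨⟨e₀, he₀⟩, hsub, hlow⟩ := hL
  have htoSet : toSet (fun e => decide (e ∈ L)) = L := by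
    ext e; simp [toSet]
  refine ⟨⟨?_, ?_, ?_⟩, htoSet⟩
  · intro e he; exact hsub (by simpa using he)
  · intro e e' he he' hr
    simp only [decide_eq_true_eq] at he ⊢
    exact hlow e he e' he' hr
  · obtain ⟨w, hw, hwr⟩ := exists_minimal_le G A (hsub he₀)
    exact ⟨w, hw, by simpa using hlow e₀ he₀ w hw.1 hwr⟩

lemma isClosed_K (A : Set E) (h : (MinimalsIn G.r A).Finite) : IsClosed (K G A) := by
  have h1 : IsClosed {f : E → Bool | ∀ e, f e = true → e ∈ A} := by
    have : {f : E → Bool | ∀ e, f e = true → e ∈ A}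
        = ⋂ e, {f : E → Bool | f e = true → e ∈ A} := by
      ext f; simp [Set.mem_iInter]
    rw [this]
    refine isClosed_iInter fun e => ?_
    by_cases hA : e ∈ A
    · simp [hA]
    · have : {f : E → Bool | f e = true → e ∈ A} = (fun f : E → Bool => f e) ⁻¹' {false} := by
        ext f
        simp only [Set.mem_setOf_eq, Set.mem_preimage, Set.mem_singleton_iff]
        constructor
        · intro hf
          cases hb : f e with
          | false => rfl
          | true => exact absurd (hf hb) hA
        · intro hf hf'
          rw [hf] at hf'; exact absurd hf' (by simp)
      rw [this]
      exact (isClosed_discrete _).preimage (continuous_apply e)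
  have h2 : IsClosed {f : E → Bool | ∀ e e', f e = true → e' ∈ A → G.r e' e → f e' = true} := by
    have : {f : E → Bool | ∀ e e', f e = true → e' ∈ A → G.r e' e → f e' = true}
        = ⋂ e, ⋂ e', {f : E → Bool | f e = true → e' ∈ A → G.r e' e → f e' = true} := by
      ext f; simp [Set.mem_iInter]
    rw [this]
    refine isClosed_iInter fun e => isClosed_iInter fun e' => ?_
    by_cases hc : e' ∈ A ∧ G.r e' e
    · have : {f : E → Bool | f e = true → e' ∈ A → G.r e' e → f e' = true}
          = ((fun f : E → Bool => f e) ⁻¹' {false}) ∪ ((fun f : E → Bool => f e') ⁻¹' {true}) := by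
        ext f
        simp only [Set.mem_setOf_eq, Set.mem_union, Set.mem_preimage, Set.mem_singleton_iff]
        constructor
        · intro hf
          cases hb : f e with
          | false => exact Or.inl rfl
          | true => exact Or.inr (hf hb hc.1 hc.2)
        · rintro (hf | hf) hf' _ _
          · rw [hf] at hf'; exact absurd hf' (by simp)
          · exact hf
      rw [this]
      exact ((isClosed_discrete _).preimage (continuous_apply e)).union
        ((isClosed_discrete _).preimage (continuous_apply e'))
    · have : {f : E → Bool | f e = true → e' ∈ A → G.r e' e → f e' = true} = Set.univ := by
        ext f
        simp only [Set.mem_setOf_eq, Set.mem_univ, iff_true]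
        intro _ hA hr; exact absurd ⟨hA, hr⟩ hc
      rw [this]; exact isClosed_univ
  have h3 : IsClosed {f : E → Bool | ∃ w ∈ MinimalsIn G.r A, f w = true} := by
    have : {f : E → Bool | ∃ w ∈ MinimalsIn G.r A, f w = true}
        = ⋃ w ∈ MinimalsIn G.r A, (fun f : E → Bool => f w) ⁻¹' {true} := by
      ext f; simp
    rw [this]
    exact h.isClosed_biUnion fun w _ =>
      (isClosed_discrete _).preimage (continuous_apply w)
  have : K G A = {f : E → Bool | ∀ e, f e = true → e ∈ A}
      ∩ ({f : E → Bool | ∀ e e', f e = true → e' ∈ A → G.r e' e → f e' = true}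
      ∩ {f : E → Bool | ∃ w ∈ MinimalsIn G.r A, f w = true}) := by
    ext f; simp [K, Set.mem_inter_iff, Set.mem_setOf_eq, and_assoc]
  rw [this]
  exact h1.inter (h2.inter h3)

lemma bool_sup (a b : Bool) : a ⊔ b = (a || b) := rfl

lemma toSet_sup (f g : E → Bool) : toSet (f ⊔ g) = toSet f ∪ toSet g := by
  ext e
  simp [toSet, Pi.sup_apply, bool_sup, Bool.or_eq_true, Set.mem_union]

lemma union_mem_K {A : Set E} {f g : E → Bool} (hf : f ∈ K G A) (hg : g ∈ K G A) :
    f ⊔ g ∈ K G A := by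
  obtain ⟨hf1, hf2, w, hw, hww⟩ := hf
  obtain ⟨hg1, hg2, -⟩ := hg
  refine ⟨?_, ?_, ⟨w, hw, ?_⟩⟩
  · intro e he
    rw [Pi.sup_apply, bool_sup, Bool.or_eq_true] at he
    rcases he with he | he
    · exact hf1 e he
    · exact hg1 e he
  · intro e e' he he' hr
    rw [Pi.sup_apply, bool_sup, Bool.or_eq_true] at he ⊢
    rcases he with he | he
    · exact Or.inl (hf2 e e' he he' hr)
    · exact Or.inr (hg2 e e' he he' hr)
  · rw [Pi.sup_apply, bool_sup, Bool.or_eq_true]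
    exact Or.inl hww

lemma isLCS_inter {A L1 L2 : Set E} (h1 : G.IsLCS A L1) (h2 : G.IsLCS A L2)
    (hne : (L1 ∩ L2).Nonempty) : G.IsLCS A (L1 ∩ L2) :=
  ⟨hne, fun e he => h1.2.1 he.1,
    fun e he e' he' hr => ⟨h1.2.2 e he.1 e' he' hr, h2.2.2 e he.2 e' he' hr⟩⟩

lemma union_min_aux {S S' : Set E} {m : ℝ}
    (hS : nmA G S = m * dnA G S) (hS' : nmA G S' = m * dnA G S')
    (hI : (S' ∩ S).Nonempty → m * dnA G (S' ∩ S) ≤ nmA G (S' ∩ S)) :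
    nmA G (S ∪ S') ≤ m * dnA G (S ∪ S') := by
  have hdisj1 : Disjoint S (S' \ S) := disjoint_sdiff_self_right
  have hU : S ∪ S' = S ∪ (S' \ S) := (Set.union_diff_self).symm
  have hdec : S' ∩ S ∪ S' \ S = S' := Set.inter_union_diff S' S
  have hdisj2 : Disjoint (S' ∩ S) (S' \ S) :=
    disjoint_sdiff_self_right.mono_left Set.inter_subset_right
  have key : nmA G (S' \ S) ≤ m * dnA G (S' \ S) := by
    rcases Set.eq_empty_or_nonempty (S' ∩ S) with hIe | hIne
    · rw [hIe, Set.empty_union] at hdec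
      rw [hdec]
      linarith [hS']
    · have hIv := hI hIne
      have hn : nmA G (S' ∩ S) + nmA G (S' \ S) = nmA G S' := by
        rw [← nmA_union G hdisj2, hdec]
      have hd : dnA G (S' ∩ S) + dnA G (S' \ S) = dnA G S' := by
        rw [← dnA_union G hdisj2, hdec]
      have hcomb : nmA G (S' ∩ S) + nmA G (S' \ S)
          = m * dnA G (S' ∩ S) + m * dnA G (S' \ S) := by
        rw [hn, hS', ← hd]; ring
      linarith
  rw [hU, nmA_union G hdisj1, dnA_union G hdisj1]
  linarith [hS]

lemma K_nonempty {A : Set E} (hA : A.Nonempty) : (K G A).Nonempty := by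
  obtain ⟨e, he⟩ := hA
  have hL : G.IsLCS A {e' ∈ A | G.r e' e} :=
    ⟨⟨e, he, G.r_refl e⟩, fun x hx => hx.1, fun x hx e' he' hr => ⟨he', G.r_trans hr hx.2⟩⟩
  exact ⟨_, (mem_K_of_isLCS G hL).1⟩

lemma exists_min (A : Set E) (hA : A.Nonempty) (h : (MinimalsIn G.r A).Finite) :
    ∃ f₀ ∈ K G A, ∀ f ∈ K G A, G.nu (toSet f₀) ≤ G.nu (toSet f) := by
  have hK : IsCompact (K G A) := (isClosed_K G A h).isCompact
  have hcont : ContinuousOn (fun f : E → Bool => G.nu (toSet f)) (K G A) := by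
    refine ContinuousOn.congr (ContinuousOn.div ((continuous_nmA G).continuousOn)
      ((continuous_dnA G).continuousOn) ?_) (fun f _ => nu_eq G _)
    intro f hf
    exact (dnA_pos G (isLCS_of_mem_K G hf).1).ne'
  obtain ⟨f₀, hf₀, hmin⟩ := hK.exists_isMinOn (K_nonempty G hA) hcont
  exact ⟨f₀, hf₀, fun f hf => hmin hf⟩

end LemA6

/-- Lemma A.6: if a nonempty `A ⊆ E` has finitely many minimal elements, the
problem of minimizing `ξ` over lower contour sets in `A` admits a minimizer,
and it has a largest minimizer. -/
theorem stmt_9 {E : Type u} [Countable E] (G : DGame E) (A : Set E) (hA : A.Nonempty)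
    (h : (MinimalsIn G.r A).Finite) :
    ∃ Lstar : Set E, G.IsLCS A Lstar ∧ (∀ L' : Set E, G.IsLCS A L' → G.xi Lstar ≤ G.xi L') ∧
      ∀ L' : Set E, G.IsLCS A L' → (∀ L'' : Set E, G.IsLCS A L'' → G.xi L' ≤ G.xi L'') →
        L' ⊆ Lstar := by
  classical
  open LemA6 in
  obtain ⟨f₀, hf₀K, hmin⟩ := LemA6.exists_min G A hA h
  set m := G.nu (LemA6.toSet f₀) with hm
  -- cross-multiplied minimality over all LCS's
  have hminK : ∀ f ∈ LemA6.K G A,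
      m * LemA6.dnA G (LemA6.toSet f) ≤ LemA6.nmA G (LemA6.toSet f) := by
    intro f hf
    have hd := LemA6.dnA_pos G (LemA6.isLCS_of_mem_K G hf).1
    have hle := hmin f hf
    rw [LemA6.nu_eq] at hle
    exact (le_div_iff₀ hd).mp hle
  have hmin2 : ∀ L : Set E, G.IsLCS A L → m * LemA6.dnA G L ≤ LemA6.nmA G L := by
    intro L hL
    obtain ⟨hfK, hts⟩ := LemA6.mem_K_of_isLCS G hL
    have := hminK _ hfK
    rwa [hts] at this
  have hf₀eq : LemA6.nmA G (LemA6.toSet f₀) = m * LemA6.dnA G (LemA6.toSet f₀) := by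
    have hd := LemA6.dnA_pos G (LemA6.isLCS_of_mem_K G hf₀K).1
    rw [hm, LemA6.nu_eq, div_mul_cancel₀ _ hd.ne']
  -- the closed set of minimizers
  set Mset : Set (E → Bool) :=
    LemA6.K G A ∩ {f | LemA6.nmA G (LemA6.toSet f) = m * LemA6.dnA G (LemA6.toSet f)} with hMdef
  have hMclosed : IsClosed Mset :=
    (LemA6.isClosed_K G A h).inter
      (isClosed_eq (LemA6.continuous_nmA G) (continuous_const.mul (LemA6.continuous_dnA G)))
  have hMf₀ : f₀ ∈ Mset := ⟨hf₀K, hf₀eq⟩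
  -- the union of two minimizers is a minimizer
  have union2 : ∀ f ∈ Mset, ∀ g ∈ Mset, f ⊔ g ∈ Mset := by
    intro f hf g hg
    have hK' : f ⊔ g ∈ LemA6.K G A := LemA6.union_mem_K G hf.1 hg.1
    refine ⟨hK', ?_⟩
    have hle : LemA6.nmA G (LemA6.toSet (f ⊔ g)) ≤ m * LemA6.dnA G (LemA6.toSet (f ⊔ g)) := by
      rw [LemA6.toSet_sup]
      refine LemA6.union_min_aux G hf.2 hg.2 (fun hne => hmin2 _ ?_)
      exact LemA6.isLCS_inter G (LemA6.isLCS_of_mem_K G hg.1) (LemA6.isLCS_of_mem_K G hf.1) hne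
    exact le_antisymm hle (hminK _ hK')
  -- the union of all minimizers, as a limit of finite unions
  set fstar : E → Bool := fun e => decide (∃ f ∈ Mset, f e = true) with hfstar
  have hu : ∀ F : Finset {f : E → Bool // f ∈ Mset},
      (f₀ ⊔ F.sup fun p => p.1) ∈ Mset := by
    intro F
    induction F using Finset.induction_on with
    | empty => simpa using hMf₀
    | @insert p F hpF ih =>
      have hrw : f₀ ⊔ (insert p F).sup (fun p => p.1)
          = p.1 ⊔ (f₀ ⊔ F.sup fun p => p.1) := by
        rw [Finset.sup_insert, sup_left_comm]
      rw [hrw]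
      exact union2 _ p.2 _ ih
  have htend : Filter.Tendsto (fun F : Finset {f : E → Bool // f ∈ Mset} =>
      f₀ ⊔ F.sup fun p => p.1) Filter.atTop (nhds fstar) := by
    rw [tendsto_pi_nhds]
    intro e
    by_cases hse : ∃ f ∈ Mset, f e = true
    · have hfe : fstar e = true := by rw [hfstar]; exact decide_eq_true hse
      rw [hfe]
      obtain ⟨f1, hf1, hf1e⟩ := hse
      refine Filter.Tendsto.congr' ?_ (tendsto_const_nhds (x := true))
      have hev : ∀ᶠ F in Filter.atTop, ({⟨f1, hf1⟩} : Finset {f : E → Bool // f ∈ Mset}) ≤ F :=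
        Filter.eventually_ge_atTop _
      filter_upwards [hev] with F hF
      have hmem : (⟨f1, hf1⟩ : {f : E → Bool // f ∈ Mset}) ∈ F :=
        Finset.singleton_subset_iff.mp hF
      have hle : f1 ≤ F.sup (fun p => p.1) :=
        Finset.le_sup (f := fun p : {f : E → Bool // f ∈ Mset} => p.1) hmem
      have htrue : (true : Bool) ≤ (f₀ ⊔ F.sup fun p => p.1) e := by
        calc (true : Bool) = f1 e := hf1e.symm
          _ ≤ (F.sup fun p => p.1) e := Pi.le_def.mp hle e
          _ ≤ (f₀ ⊔ F.sup fun p => p.1) e := Pi.le_def.mp le_sup_right e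
      exact (le_antisymm (Bool.le_true _) htrue).symm
    · have hfe : fstar e = false := by rw [hfstar]; exact decide_eq_false hse
      rw [hfe]
      have hall : ∀ F : Finset {f : E → Bool // f ∈ Mset},
          (f₀ ⊔ F.sup fun p => p.1) e = false := by
        intro F
        have hf₀e : f₀ e = false := by
          cases hb : f₀ e with
          | false => rfl
          | true => exact absurd ⟨f₀, hMf₀, hb⟩ hse
        have hsup : (F.sup fun p => p.1) e = false := by
          rw [Finset.sup_apply]
          refine (Finset.sup_eq_bot_iff _ _).mpr fun p _ => ?_
          have hpf : p.1 e = false := by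
            cases hb : p.1 e with
            | false => rfl
            | true => exact absurd ⟨p.1, p.2, hb⟩ hse
          exact hpf
        rw [Pi.sup_apply, hf₀e, hsup]
        rfl
      exact tendsto_const_nhds.congr fun F => (hall F).symm
  have hfstarM : fstar ∈ Mset :=
    hMclosed.mem_of_tendsto htend (Filter.Eventually.of_forall hu)
  -- conclusions
  have hstarLCS : G.IsLCS A (LemA6.toSet fstar) := LemA6.isLCS_of_mem_K G hfstarM.1
  have hdstar := LemA6.dnA_pos G hstarLCS.1
  have hnustar : G.nu (LemA6.toSet fstar) = m := by
    rw [LemA6.nu_eq, hfstarM.2, mul_div_assoc, div_self hdstar.ne', mul_one]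
  have hstarIcc : G.nu (LemA6.toSet fstar) ∈ Set.Icc (0:ℝ) 1 := LemA6.nu_mem_Icc G hstarLCS.1
  have hximin : ∀ L' : Set E, G.IsLCS A L' → G.xi (LemA6.toSet fstar) ≤ G.xi L' := by
    intro L' hL'
    have hL'Icc : G.nu L' ∈ Set.Icc (0:ℝ) 1 := LemA6.nu_mem_Icc G hL'.1
    have hnuL' : m ≤ G.nu L' := by
      obtain ⟨hfK, hts⟩ := LemA6.mem_K_of_isLCS G hL'
      have := hmin _ hfK
      rwa [hts] at this
    exact (G.φ_mono.le_iff_le hstarIcc hL'Icc).mpr (hnustar ▸ hnuL')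
  refine ⟨LemA6.toSet fstar, hstarLCS, hximin, ?_⟩
  intro L' hL' hLmin
  obtain ⟨hfK, hts⟩ := LemA6.mem_K_of_isLCS G hL'
  have hL'Icc : G.nu L' ∈ Set.Icc (0:ℝ) 1 := LemA6.nu_mem_Icc G hL'.1
  have h1 : G.xi (LemA6.toSet fstar) ≤ G.xi L' := hximin L' hL'
  have h2 : G.xi L' ≤ G.xi (LemA6.toSet fstar) := hLmin _ hstarLCS
  have hnueq : G.nu L' = m := by
    have ha := (G.φ_mono.le_iff_le hL'Icc hstarIcc).mp h2
    have hb := (G.φ_mono.le_iff_le hstarIcc hL'Icc).mp h1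
    exact (le_antisymm ha hb).trans hnustar
  have hMem : (fun e => decide (e ∈ L')) ∈ Mset := by
    refine ⟨hfK, ?_⟩
    simp only [Set.mem_setOf_eq]
    rw [hts]
    have hd := LemA6.dnA_pos G hL'.1
    have hdiv : LemA6.nmA G L' / LemA6.dnA G L' = m := by
      rw [← LemA6.nu_eq]; exact hnueq
    exact (div_eq_iff hd.ne').mp hdiv
  intro e heL'
  show fstar e = true
  rw [hfstar]
  exact decide_eq_true ⟨_, hMem, decide_eq_true heL'⟩
end

section
/- In the left-censored disclosure model, for every n ∈ ℕ let E_n = {e ∈ E : N(e) = n}. Then ∑_{e∈E_n} F_G(e) = ((q−α)/q)·(α/q)ⁿ and ∑_{e∈E_n} F_B(e) = ((p−α)/p)·(α/p)ⁿ. Consequently ν(E_n) = 1 / (1 + ((1−π₀)/π₀)·((p−α)/(q−α))·(q/p)^{n+1}). -/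
open scoped BigOperators

namespace LeftCensored

/-- Evidence: a finite sequence of binary signals; `true` stands for a high
return (`g`) and `false` for a low return (`b`). A sequence is a list whose
suffixes are the most recent signals. -/
abbrev Ev := List Bool

/-- `G(e)`: the number of `g`'s in `e`. -/
def Gc (e : Ev) : ℕ := e.count true

/-- `B(e)`: the number of `b`'s in `e`. -/
def Bc (e : Ev) : ℕ := e.count false

/-- `D(e) = G(e) − B(e)`. -/
def D (e : Ev) : ℤ := (Gc e : ℤ) - (Bc e : ℤ)

/-- `N(e) = max_{0 ≤ k ≤ L(e)} D(e|_k)`, the maximum of `D` over all suffixes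
(truncations from the left) of `e`; since the empty suffix gives `D = 0`, this
equals the fold of `max` over the suffixes starting from `0`. -/
def N (e : Ev) : ℤ := (e.tails.map D).foldr max 0

/-- The evidence distribution in the good state. -/
noncomputable def FG (p q : ℝ) (e : Ev) : ℝ := (1 - p - q) * p ^ Gc e * q ^ Bc e

/-- The evidence distribution in the bad state. -/
noncomputable def FB (p q : ℝ) (e : Ev) : ℝ := (1 - p - q) * p ^ Bc e * q ^ Gc e

/-- Posterior belief `ν(A)` that the state is good given evidence in `A`. -/
noncomputable def nu (p q π0 : ℝ) (A : Set Ev) : ℝ :=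
  ((∑' e : A, FG p q e) * π0) /
    ((∑' e : A, FG p q e) * π0 + (∑' e : A, FB p q e) * (1 - π0))

/-- `α = (1 − √(1 − 4pq))/2`. -/
noncomputable def alpha (p q : ℝ) : ℝ := (1 - Real.sqrt (1 - 4 * p * q)) / 2

/-- The sender's equilibrium value function (Proposition 4). -/
noncomputable def V (p q π0 : ℝ) (e : Ev) : ℝ :=
  1 / (1 + ((1 - π0) / π0) * ((p - alpha p q) / (q - alpha p q)) * (q / p) ^ (N e + 1))

/-- `L` is a (nonempty) lower contour set in `A` with respect to the suffix
(left-censoring) order. -/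
def IsLCS (A L : Set Ev) : Prop :=
  L.Nonempty ∧ L ⊆ A ∧ ∀ e ∈ L, ∀ e' ∈ A, e' <:+ e → e' ∈ L

/-- A truth-leaning equilibrium of the left-censored disclosure game (the
receiver's response `φ` is the identity). -/
structure Eqm (p q π0 : ℝ) where
  σ : Ev → Ev → ℝ
  act : Ev → ℝ
  μ : Ev → ℝ
  σ_nonneg : ∀ e m, 0 ≤ σ e m
  σ_hasSum : ∀ e, HasSum (σ e) 1
  feasible : ∀ e m, 0 < σ e m → m <:+ e
  μ_mem : ∀ m, μ m ∈ Set.Icc (0 : ℝ) 1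
  sender_opt : ∀ e m, 0 < σ e m → ∀ m', m' <:+ e → act m' ≤ act m
  receiver_opt : ∀ m, act m = μ m
  bayes : ∀ m, (∃ e, 0 < σ e m) →
    μ m = (∑' e : {e : Ev // m <:+ e}, σ e.1 m * FG p q e.1 * π0) /
      (∑' e : {e : Ev // m <:+ e}, σ e.1 m * (FG p q e.1 * π0 + FB p q e.1 * (1 - π0)))
  truth_leaning : ∀ e, (∀ m, m <:+ e → act m ≤ act e) → σ e e = 1
  offpath : ∀ m, (¬ ∃ e, 0 < σ e m) → μ m = nu p q π0 {m}

end LeftCensored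

namespace LeftCensored

lemma D_nil : D [] = 0 := rfl
lemma N_nil : N [] = 0 := rfl
lemma D_cons (a : Bool) (l : Ev) : D (a :: l) = (if a then 1 else -1) + D l := by
  simp [D, Gc, Bc, List.count_cons]; cases a <;> simp <;> ring
lemma N_cons (a : Bool) (l : Ev) : N (a :: l) = max (D (a :: l)) (N l) := by
  simp [N, List.tails]
lemma D_append (a b : Ev) : D (a ++ b) = D a + D b := by
  simp [D, Gc, Bc, List.count_append]; ring
lemma N_nonneg (e : Ev) : 0 ≤ N e := by
  induction e with
  | nil => simp [N_nil]
  | cons a l ih => rw [N_cons]; exact le_max_of_le_right ih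
lemma D_le_N {s e : Ev} (h : s <:+ e) : D s ≤ N e := by
  induction e with
  | nil => rw [List.suffix_nil.mp h]; simp [D_nil, N_nil]
  | cons a l ih =>
    rw [N_cons]
    rcases (List.suffix_cons_iff).mp h with h1 | h2
    · exact h1 ▸ le_max_left _ _
    · exact le_max_of_le_right (ih h2)
lemma N_attained (e : Ev) : ∃ s, s <:+ e ∧ N e = D s := by
  induction e with
  | nil => exact ⟨[], List.suffix_rfl, rfl⟩
  | cons a l ih =>
    rcases ih with ⟨s, hs, hNs⟩
    rw [N_cons]
    rcases max_cases (D (a :: l)) (N l) with ⟨h1, _⟩ | ⟨h1, _⟩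
    · exact ⟨a :: l, List.suffix_rfl, h1⟩
    · exact ⟨s, hs.trans (List.suffix_cons a l), h1.trans hNs⟩

lemma suffix_append_cases {s a h : Ev} (hs : s <:+ a ++ h) :
    s <:+ h ∨ ∃ s', s' <:+ a ∧ s = s' ++ h := by
  rcases List.suffix_or_suffix_of_suffix hs (List.suffix_append a h) with h1 | h1
  · exact Or.inl h1
  · rcases h1 with ⟨s', rfl⟩
    right
    refine ⟨s', ?_, rfl⟩
    rcases hs with ⟨t, ht⟩
    rw [← List.append_assoc] at ht
    exact ⟨t, List.append_cancel_right ht⟩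

/-- First-hit-of-1 set. -/
def Hs : Set Ev := {h | D h = 1 ∧ ∀ s, s <:+ h → s ≠ h → D s ≤ 0}

lemma N_of_mem_Hs {h : Ev} (hh : h ∈ Hs) : N h = 1 := by
  rcases N_attained h with ⟨s, hs, hNs⟩
  rcases eq_or_ne s h with rfl | hne
  · rw [hNs, hh.1]
  · have h1 : (1 : ℤ) ≤ N h := hh.1 ▸ D_le_N List.suffix_rfl
    have := hh.2 s hs hne
    omega

lemma N_append_Hs {f h : Ev} (hh : h ∈ Hs) : N (f ++ h) = N f + 1 := by
  rcases N_attained f with ⟨s, hs, hNs⟩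
  apply le_antisymm
  · rcases N_attained (f ++ h) with ⟨t, ht, hNt⟩
    rcases suffix_append_cases ht with h1 | ⟨s', hs', rfl⟩
    · have : D t ≤ 1 := by
        rcases eq_or_ne t h with rfl | hne
        · exact le_of_eq hh.1
        · exact (hh.2 t h1 hne).trans (by norm_num)
      have := N_nonneg f; omega
    · rw [hNt, D_append, hh.1]
      have := D_le_N hs'; omega
  · have hsfh : s ++ h <:+ f ++ h := by
      rcases hs with ⟨t, rfl⟩; exact ⟨t, (List.append_assoc t s h).symm⟩
    have : D (s ++ h) ≤ N (f ++ h) := D_le_N hsfh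
    rw [D_append, hh.1] at this; omega

/-- Existence & uniqueness of first-hit split. -/
lemma split_exists {e : Ev} (he : 1 ≤ N e) : ∃ f h, h ∈ Hs ∧ e = f ++ h := by
  induction e with
  | nil => simp [N_nil] at he
  | cons a l ih =>
    by_cases hl : 1 ≤ N l
    · rcases ih hl with ⟨f, h, hh, rfl⟩
      exact ⟨a :: f, h, hh, rfl⟩
    · push_neg at hl
      have hl0 : N l = 0 := le_antisymm (by omega) (N_nonneg l)
      have hDe : D (a :: l) = N (a :: l) := by
        rw [N_cons] at he ⊢
        have : D (a :: l) ≤ 1 := by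
          rw [D_cons]
          have : D l ≤ N l := D_le_N List.suffix_rfl
          split <;> omega
        omega
      refine ⟨[], a :: l, ⟨?_, ?_⟩, rfl⟩
      · rw [N_cons] at he
        have h2 : D (a :: l) ≤ 1 := by
          rw [D_cons]
          have : D l ≤ N l := D_le_N List.suffix_rfl
          split <;> omega
        omega
      · intro s hsuf hne
        rcases List.suffix_cons_iff.mp hsuf with h1 | h2
        · exact absurd h1 hne
        · exact (D_le_N h2).trans (le_of_eq hl0)

lemma Hs_suffix_eq {h h' e : Ev} (hh : h ∈ Hs) (hh' : h' ∈ Hs)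
    (h1 : h <:+ e) (h2 : h' <:+ e) : h = h' := by
  rcases List.suffix_or_suffix_of_suffix h1 h2 with hs | hs
  · rcases eq_or_ne h h' with he | hne
    · exact he
    · have := hh'.2 h hs hne; rw [hh.1] at this; omega
  · rcases eq_or_ne h' h with he | hne
    · exact he.symm
    · have := hh.2 h' hs hne; rw [hh'.1] at this; omega

lemma split_unique {f h f' h' : Ev} (hh : h ∈ Hs) (hh' : h' ∈ Hs)
    (heq : f ++ h = f' ++ h') : f = f' ∧ h = h' := by
  have hhe : h = h' := Hs_suffix_eq hh hh' (List.suffix_append f h)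
    (heq ▸ List.suffix_append f' h')
  subst hhe
  exact ⟨List.append_cancel_right heq, rfl⟩


/-! ### Weights and summability -/

noncomputable def wt (x y : ℝ) (e : Ev) : ℝ := x ^ Gc e * y ^ Bc e

lemma wt_nil (x y : ℝ) : wt x y [] = 1 := by simp [wt, Gc, Bc]

lemma wt_cons (x y : ℝ) (a : Bool) (l : Ev) :
    wt x y (a :: l) = (if a then x else y) * wt x y l := by
  cases a <;> simp [wt, Gc, Bc, List.count_cons, pow_succ] <;> ring

lemma wt_append (x y : ℝ) (a b : Ev) : wt x y (a ++ b) = wt x y a * wt x y b := by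
  simp [wt, Gc, Bc, List.count_append, pow_add]; ring

lemma wt_nonneg {x y : ℝ} (hx : 0 ≤ x) (hy : 0 ≤ y) (e : Ev) : 0 ≤ wt x y e :=
  mul_nonneg (pow_nonneg hx _) (pow_nonneg hy _)

lemma wt_eq_prod (x y : ℝ) (e : Ev) :
    wt x y e = (e.map (fun b => if b then x else y)).prod := by
  induction e with
  | nil => simp [wt_nil]
  | cons a l ih => rw [wt_cons, List.map_cons, List.prod_cons, ih]

/-- The finset of all lists of length `L`. -/
def FL (L : ℕ) : Finset Ev := Finset.image List.ofFn (Finset.univ : Finset (Fin L → Bool))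

lemma mem_FL {L : ℕ} {e : Ev} : e ∈ FL L ↔ e.length = L := by
  constructor
  · rintro h
    rcases Finset.mem_image.mp h with ⟨g, -, rfl⟩
    simp
  · rintro rfl
    exact Finset.mem_image.mpr ⟨e.get, Finset.mem_univ _, List.ofFn_get e⟩

lemma sum_FL (x y : ℝ) (L : ℕ) : ∑ e ∈ FL L, wt x y e = (x + y) ^ L := by
  rw [FL, Finset.sum_image (fun a _ b _ h => List.ofFn_injective h)]
  have h1 : ∀ g : Fin L → Bool, wt x y (List.ofFn g)
      = ∏ i : Fin L, (if g i then x else y) := by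
    intro g
    rw [wt_eq_prod, List.map_ofFn, List.prod_ofFn]
    rfl
  rw [Finset.sum_congr rfl (fun g _ => h1 g)]
  have h2 : ((x + y) ^ L) = ∏ _i : Fin L, ∑ b : Bool, (if b then x else y) := by
    simp [Finset.prod_const]
  rw [h2, Finset.prod_univ_sum, Fintype.piFinset_univ]

section Params
variable {x y : ℝ} (hx : 0 < x) (hy : 0 < y) (hxy : x + y < 1)

include hx hy hxy

lemma partial_sum_le (u : Finset Ev) : ∑ e ∈ u, wt x y e ≤ (1 - (x + y))⁻¹ := by
  classical
  set m := (u.sup List.length) + 1 with hm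
  have hsub : u ⊆ (Finset.range m).biUnion FL := by
    intro e he
    refine Finset.mem_biUnion.mpr ⟨e.length, ?_, mem_FL.mpr rfl⟩
    exact Finset.mem_range.mpr (Nat.lt_succ_of_le (Finset.le_sup he))
  have hd : (↑(Finset.range m) : Set ℕ).PairwiseDisjoint FL := by
    intro i _ j _ hij
    refine Finset.disjoint_left.mpr (fun e hei hej => hij ?_)
    rw [← mem_FL.mp hei, mem_FL.mp hej]
  calc ∑ e ∈ u, wt x y e ≤ ∑ e ∈ (Finset.range m).biUnion FL, wt x y e :=
        Finset.sum_le_sum_of_subset_of_nonneg hsub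
          (fun e _ _ => wt_nonneg hx.le hy.le e)
    _ = ∑ L ∈ Finset.range m, (x + y) ^ L := by
        rw [Finset.sum_biUnion hd]
        exact Finset.sum_congr rfl (fun L _ => sum_FL x y L)
    _ ≤ (1 - (x + y))⁻¹ :=
        sum_le_hasSum _ (fun i _ => pow_nonneg (by linarith) i)
          (hasSum_geometric_of_lt_one (by linarith) hxy)

lemma summable_wt : Summable (wt x y) :=
  summable_of_sum_le (fun e => wt_nonneg hx.le hy.le e) (partial_sum_le hx hy hxy)

lemma hasSum_wt : HasSum (wt x y) (1 - (x + y))⁻¹ := by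
  refine hasSum_of_isLUB_of_nonneg _ (fun e => wt_nonneg hx.le hy.le e) ⟨?_, ?_⟩
  · rintro z ⟨u, rfl⟩
    exact partial_sum_le hx hy hxy u
  · intro z hz
    have hten : Filter.Tendsto (fun m => ∑ L ∈ Finset.range m, (x + y) ^ L)
        Filter.atTop (nhds (1 - (x + y))⁻¹) :=
      (hasSum_geometric_of_lt_one (by linarith) hxy).tendsto_sum_nat
    refine le_of_tendsto hten (Filter.Eventually.of_forall (fun m => ?_))
    have hd : (↑(Finset.range m) : Set ℕ).PairwiseDisjoint FL := by
      intro i _ j _ hij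
      refine Finset.disjoint_left.mpr (fun e hei hej => hij ?_)
      rw [← mem_FL.mp hei, mem_FL.mp hej]
    have : ∑ L ∈ Finset.range m, (x + y) ^ L
        = ∑ e ∈ (Finset.range m).biUnion FL, wt x y e := by
      rw [Finset.sum_biUnion hd]
      exact (Finset.sum_congr rfl (fun L _ => (sum_FL x y L).symm))
    rw [this]
    exact hz ⟨_, rfl⟩

end Params


/-! ### Structure of the first-hit set -/

lemma D_false : D [false] = -1 := by simp [D, Gc, Bc]

lemma true_mem_Hs : ([true] : Ev) ∈ Hs := by
  constructor
  · simp [D, Gc, Bc]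
  · intro s hs hne
    rcases List.suffix_cons_iff.mp hs with h1 | h2
    · exact absurd h1 hne
    · rw [List.suffix_nil.mp h2]; simp [D_nil]

lemma cat_mem_Hs {h1 h2 : Ev} (hh1 : h1 ∈ Hs) (hh2 : h2 ∈ Hs) :
    h1 ++ (h2 ++ [false]) ∈ Hs := by
  constructor
  · rw [D_append, D_append, hh1.1, hh2.1, D_false]; ring
  · intro s hs hne
    rcases suffix_append_cases hs with hcase | ⟨s', hs', rfl⟩
    · rcases suffix_append_cases hcase with hc2 | ⟨s'', hs'', rfl⟩
      · rcases List.suffix_cons_iff.mp hc2 with h1 | h2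
        · rw [h1, D_false]; norm_num
        · rw [List.suffix_nil.mp h2, D_nil]
      · rw [D_append, D_false]
        have := D_le_N hs''
        rw [N_of_mem_Hs hh2] at this
        omega
    · have hne' : s' ≠ h1 := fun hc => hne (by rw [hc])
      have := hh1.2 s' hs' hne'
      rw [D_append, D_append, hh2.1, D_false]
      omega

lemma Hs_elim {h : Ev} (hh : h ∈ Hs) :
    h = [true] ∨ ∃ h1 h2, h1 ∈ Hs ∧ h2 ∈ Hs ∧ h = h1 ++ (h2 ++ [false]) := by
  rcases List.eq_nil_or_concat h with rfl | ⟨L, b, rfl⟩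
  · exfalso; have := hh.1; rw [D_nil] at this; omega
  · rw [List.concat_eq_append] at hh ⊢
    cases b
    · -- last element false : h = L ++ [false], D L = 2
      right
      have hDL : D L = 2 := by
        have := hh.1; rw [D_append, D_false] at this; omega
      have hNL : 1 ≤ N L := by
        have := D_le_N (List.suffix_rfl : L <:+ L); omega
      rcases split_exists hNL with ⟨f, h2, hh2, rfl⟩
      refine ⟨f, h2, ⟨?_, ?_⟩, hh2, by rw [List.append_assoc]⟩
      · rw [D_append, hh2.1] at hDL; omega
      · intro s hs hne
        have hsuf : s ++ (h2 ++ [false]) <:+ (f ++ h2) ++ [false] := by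
          rw [List.append_assoc]
          rcases hs with ⟨t, rfl⟩
          exact ⟨t, by rw [List.append_assoc]⟩
        have hne2 : s ++ (h2 ++ [false]) ≠ (f ++ h2) ++ [false] := by
          intro hc
          rw [List.append_assoc f h2] at hc
          exact hne (List.append_cancel_right hc)
        have := hh.2 _ hsuf hne2
        rw [D_append, D_append, hh2.1, D_false] at this
        omega
    · -- last element true : [true] is a suffix with D = 1
      left
      have hsuf : [true] <:+ L ++ [true] := ⟨L, rfl⟩
      by_contra hne
      have := hh.2 [true] hsuf (fun hc => hne hc.symm)
      simp [D, Gc, Bc] at this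


/-! ### Sums over the first-hit set and level sets -/

section Sums
variable {x y : ℝ} (hx : 0 < x) (hy : 0 < y) (hxy : x + y < 1)

include hx hy hxy

lemma summable_sub (s : Set Ev) : Summable (fun e : s => wt x y e.1) :=
  (summable_wt hx hy hxy).subtype s

lemma summable_norm_sub (s : Set Ev) : Summable (fun e : s => ‖wt x y e.1‖) := by
  refine (summable_sub hx hy hxy s).congr (fun e => ?_)
  rw [Real.norm_eq_abs, abs_of_nonneg (wt_nonneg hx.le hy.le _)]

omit hx hy hxy

/-- Sum of weights over the first-hit set. -/
noncomputable def Wv (x y : ℝ) : ℝ := ∑' h : Hs, wt x y h.1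

include hx hy hxy

lemma Wv_nonneg : 0 ≤ Wv x y :=
  tsum_nonneg (fun h => wt_nonneg hx.le hy.le _)

lemma Wv_quadratic : Wv x y = x + y * (Wv x y) ^ 2 := by
  classical
  set K : Set Ev := (fun p : Ev × Ev => p.1 ++ (p.2 ++ [false])) '' (Hs ×ˢ Hs) with hK
  have hHs : Hs = ({[true]} : Set Ev) ∪ K := by
    ext h
    constructor
    · intro hh
      rcases Hs_elim hh with rfl | ⟨h1, h2, hh1, hh2, rfl⟩
      · exact Or.inl rfl
      · exact Or.inr ⟨(h1, h2), ⟨hh1, hh2⟩, rfl⟩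
    · rintro (rfl | ⟨⟨h1, h2⟩, ⟨hh1, hh2⟩, rfl⟩)
      · exact true_mem_Hs
      · exact cat_mem_Hs hh1 hh2
  have hdisj : Disjoint ({[true]} : Set Ev) K := by
    rw [Set.disjoint_left]
    rintro e rfl ⟨⟨h1, h2⟩, ⟨hh1, hh2⟩, hc⟩
    have := congrArg List.length hc
    simp at this
    have h1n : h1 = [] := List.length_eq_zero_iff.mp (by omega)
    rw [h1n] at hh1
    have := hh1.1; rw [D_nil] at this; omega
  -- the equivalence between Hs × Hs and K
  have hinj : Function.Injective
      (fun p : Hs × Hs => (p.1.1 ++ (p.2.1 ++ [false]) : Ev)) := by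
    rintro ⟨⟨h1, hh1⟩, ⟨h2, hh2⟩⟩ ⟨⟨h1', hh1'⟩, ⟨h2', hh2'⟩⟩ hc
    simp only at hc
    rw [← List.append_assoc, ← List.append_assoc] at hc
    have h2c := List.append_cancel_right hc
    rcases split_unique hh2 hh2' h2c with ⟨e1, e2⟩
    simp [Prod.ext_iff, Subtype.ext_iff, e1, e2]
  have hbij : Function.Bijective
      (fun p : Hs × Hs => (⟨p.1.1 ++ (p.2.1 ++ [false]), ⟨(p.1.1, p.2.1), ⟨p.1.2, p.2.2⟩, rfl⟩⟩ : K)) := by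
    constructor
    · intro a b hc
      exact hinj (congrArg Subtype.val hc)
    · rintro ⟨e, ⟨h1, h2⟩, ⟨hh1, hh2⟩, rfl⟩
      exact ⟨(⟨h1, hh1⟩, ⟨h2, hh2⟩), rfl⟩
  have hKsum : (∑' k : K, wt x y k.1) = Wv x y * (Wv x y * y) := by
    rw [← Equiv.tsum_eq (Equiv.ofBijective _ hbij) (fun k : K => wt x y k.1)]
    have h1 : ∀ p : Hs × Hs,
        wt x y ((Equiv.ofBijective _ hbij) p).1
          = wt x y p.1.1 * (wt x y p.2.1 * y) := by
      rintro ⟨⟨h1, hh1⟩, ⟨h2, hh2⟩⟩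
      show wt x y (h1 ++ (h2 ++ [false])) = _
      rw [wt_append, wt_append, wt_cons, wt_nil]
      simp
    rw [tsum_congr h1]
    have := tsum_mul_tsum_of_summable_norm (f := fun h : Hs => wt x y h.1)
      (g := fun h : Hs => wt x y h.1 * y)
      (summable_norm_sub hx hy hxy Hs)
      (by
        refine Summable.congr (((summable_sub hx hy hxy Hs).mul_right y).norm) (fun h => rfl))
    rw [← this, Wv, tsum_mul_right]
  calc Wv x y = ∑' h : ↑(({[true]} : Set Ev) ∪ K), wt x y h.1 := by rw [Wv, ← hHs]
    _ = (∑' h : ↑({[true]} : Set Ev), wt x y h.1) + ∑' k : K, wt x y k.1 :=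
        Summable.tsum_union_disjoint hdisj
          (summable_sub hx hy hxy {[true]}) (summable_sub hx hy hxy K)
    _ = x + y * (Wv x y) ^ 2 := by
        rw [tsum_singleton ([true] : Ev) (wt x y), hKsum, wt_cons, wt_nil]
        simp; ring

end Sums


section Sums2
variable {x y : ℝ} (hx : 0 < x) (hy : 0 < y) (hxy : x + y < 1)

/-- Sum of weights over the level set `{N = n}`. -/
noncomputable def Sv (x y : ℝ) (n : ℕ) : ℝ := ∑' e : {e : Ev // N e = (n : ℤ)}, wt x y e.1

include hx hy hxy

lemma summable_level (n : ℕ) : Summable (fun e : {e : Ev // N e = (n : ℤ)} => wt x y e.1) :=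
  summable_sub hx hy hxy {e : Ev | N e = (n : ℤ)}

lemma Sv_succ (n : ℕ) : Sv x y (n + 1) = Sv x y n * Wv x y := by
  have hbij : Function.Bijective
      (fun p : {f : Ev // N f = (n : ℤ)} × Hs =>
        (⟨p.1.1 ++ p.2.1, by
          rw [N_append_Hs p.2.2, p.1.2]; push_cast; ring⟩ :
            {e : Ev // N e = ((n + 1 : ℕ) : ℤ)})) := by
    constructor
    · rintro ⟨⟨f, hf⟩, ⟨h, hh⟩⟩ ⟨⟨f', hf'⟩, ⟨h', hh'⟩⟩ hc
      have hc2 : f ++ h = f' ++ h' := congrArg Subtype.val hc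
      rcases split_unique hh hh' hc2 with ⟨e1, e2⟩
      simp [Prod.ext_iff, Subtype.ext_iff, e1, e2]
    · rintro ⟨e, he⟩
      have h1 : 1 ≤ N e := by rw [he]; push_cast; omega
      rcases split_exists h1 with ⟨f, h, hh, rfl⟩
      have hNf : N f = (n : ℤ) := by
        have := N_append_Hs (f := f) hh
        rw [he] at this; push_cast at this; omega
      exact ⟨(⟨f, hNf⟩, ⟨h, hh⟩), Subtype.ext rfl⟩
  rw [Sv, ← Equiv.tsum_eq (Equiv.ofBijective _ hbij)
    (fun e : {e : Ev // N e = ((n + 1 : ℕ) : ℤ)} => wt x y e.1)]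
  have h1 : ∀ p : {f : Ev // N f = (n : ℤ)} × Hs,
      wt x y ((Equiv.ofBijective _ hbij) p).1 = wt x y p.1.1 * wt x y p.2.1 := by
    rintro ⟨⟨f, hf⟩, ⟨h, hh⟩⟩
    exact wt_append x y f h
  have hmul := tsum_mul_tsum_of_summable_norm
      (f := fun f : {f : Ev // N f = (n : ℤ)} => wt x y f.1)
      (g := fun h : Hs => wt x y h.1)
      (summable_norm_sub hx hy hxy {e : Ev | N e = (n : ℤ)})
      (summable_norm_sub hx hy hxy Hs)
  rw [tsum_congr h1, ← hmul]
  rfl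

lemma Sv_pow (n : ℕ) : Sv x y n = Sv x y 0 * (Wv x y) ^ n := by
  induction n with
  | zero => simp
  | succ m ih => rw [Sv_succ hx hy hxy, ih, pow_succ]; ring

lemma one_le_Sv0 : 1 ≤ Sv x y 0 := by
  have h0 : N ([] : Ev) = ((0 : ℕ) : ℤ) := by simp [N_nil]
  have := Summable.le_tsum (summable_level hx hy hxy 0) ⟨[], h0⟩
    (fun j _ => wt_nonneg hx.le hy.le _)
  rwa [wt_nil] at this

lemma tsum_Sv_eq : Summable (Sv x y) ∧ ∑' n, Sv x y n = (1 - (x + y))⁻¹ := by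
  classical
  set F : Ev → ℕ := fun e => (N e).toNat with hF
  set eqv := Equiv.sigmaFiberEquiv F with heqv
  have hsig : Summable (fun σ : Σ n : ℕ, {e : Ev // F e = n} => wt x y σ.2.1) := by
    have := (Equiv.summable_iff eqv (f := wt x y)).mpr (summable_wt hx hy hxy)
    exact this
  have hfib : ∀ n : ℕ, (∑' e : {e : Ev // F e = n}, wt x y e.1) = Sv x y n := by
    intro n
    have hiff : ∀ e : Ev, F e = n ↔ N e = (n : ℤ) := by
      intro e
      have := N_nonneg e
      show (N e).toNat = n ↔ N e = (n : ℤ)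
      constructor <;> intro h <;> omega
    have h2 := Equiv.tsum_eq (Equiv.subtypeEquivRight hiff)
      (fun e : {e : Ev // N e = (n : ℤ)} => wt x y e.1)
    exact (tsum_congr (fun c : {e : Ev // F e = n} =>
      (rfl : wt x y c.1 = wt x y ((Equiv.subtypeEquivRight hiff) c).1))).trans h2
  constructor
  · have h2 := ((summable_sigma_of_nonneg
        (fun σ : Σ n : ℕ, {e : Ev // F e = n} => wt_nonneg hx.le hy.le σ.2.1)).mp hsig).2
    exact h2.congr hfib
  · have h1 := Summable.tsum_sigma hsig
    have h2 : (∑' σ : Σ n : ℕ, {e : Ev // F e = n}, wt x y σ.2.1)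
        = ∑' e : Ev, wt x y e := Equiv.tsum_eq eqv (wt x y)
    rw [h2, (hasSum_wt hx hy hxy).tsum_eq] at h1
    rw [tsum_congr (fun n => (hfib n).symm)]
    exact h1.symm

lemma Wv_lt_one : Wv x y < 1 := by
  have hS := (tsum_Sv_eq hx hy hxy).1
  have hS2 : Summable (fun n : ℕ => Sv x y 0 * (Wv x y) ^ n) :=
    hS.congr (fun n => Sv_pow hx hy hxy n)
  have hne : Sv x y 0 ≠ 0 := by have := one_le_Sv0 hx hy hxy; linarith
  have hgeom : Summable (fun n : ℕ => (Wv x y) ^ n) :=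
    (summable_mul_left_iff hne).mp hS2
  have := summable_geometric_iff_norm_lt_one.mp hgeom
  rwa [Real.norm_eq_abs, abs_of_nonneg (Wv_nonneg hx hy hxy)] at this

lemma Sv0_eq : Sv x y 0 = (1 - Wv x y) * (1 - (x + y))⁻¹ := by
  have h1 := (tsum_Sv_eq hx hy hxy).2
  have h2 : (∑' n : ℕ, Sv x y n) = Sv x y 0 * (1 - Wv x y)⁻¹ := by
    rw [tsum_congr (fun n => Sv_pow hx hy hxy n), tsum_mul_left,
      tsum_geometric_of_lt_one (Wv_nonneg hx hy hxy) (Wv_lt_one hx hy hxy)]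
  rw [h2] at h1
  have hW1 : 1 - Wv x y ≠ 0 := by have := Wv_lt_one hx hy hxy; intro h; linarith
  field_simp at h1 ⊢
  linarith [h1]

end Sums2



section Alpha
variable {x y : ℝ} (hx : 0 < x) (hy : 0 < y) (hxy : x + y < 1)

lemma alpha_comm : alpha x y = alpha y x := by
  rw [alpha, alpha, show 4 * x * y = 4 * y * x by ring]

include hx hy hxy

lemma sqrt_facts : 0 ≤ Real.sqrt (1 - 4 * x * y) ∧
    (Real.sqrt (1 - 4 * x * y)) ^ 2 = 1 - 4 * x * y := by
  refine ⟨Real.sqrt_nonneg _, Real.sq_sqrt ?_⟩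
  nlinarith [sq_nonneg (x - y), sq_nonneg (x + y)]

lemma alpha_pos : 0 < alpha x y := by
  obtain ⟨hs0, hs2⟩ := sqrt_facts hx hy hxy
  rw [alpha]
  nlinarith

lemma alpha_mul : alpha x y * (1 - alpha x y) = x * y := by
  obtain ⟨hs0, hs2⟩ := sqrt_facts hx hy hxy
  rw [alpha]
  nlinarith

lemma alpha_lt : alpha x y < y := by
  obtain ⟨hs0, hs2⟩ := sqrt_facts hx hy hxy
  rw [alpha]
  nlinarith [sq_nonneg (Real.sqrt (1 - 4 * x * y) + (1 - 2 * y))]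

lemma alpha_lt' : alpha x y < 1 - y := by
  obtain ⟨hs0, hs2⟩ := sqrt_facts hx hy hxy
  rw [alpha]
  nlinarith [sq_nonneg (Real.sqrt (1 - 4 * x * y) + (2 * y - 1))]

lemma Wv_eq : Wv x y = alpha x y / y := by
  set W := Wv x y with hW
  set a := alpha x y with ha
  have hq : W = x + y * W ^ 2 := Wv_quadratic hx hy hxy
  have hmul : a * (1 - a) = x * y := alpha_mul hx hy hxy
  have hy0 : y ≠ 0 := hy.ne'
  have h0 : (W - a / y) * (W - (1 - a) / y) = 0 := by
    have hfac : y * ((W - a / y) * (W - (1 - a) / y))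
        = (y * W ^ 2 - W + x) + (a * (1 - a) - x * y) / y := by
      field_simp
      ring
    have h1 : y * ((W - a / y) * (W - (1 - a) / y)) = 0 := by
      rw [hfac, hmul]
      simp
      linarith [hq]
    rcases mul_eq_zero.mp h1 with h | h
    · exact absurd h hy0
    · exact h
  rcases mul_eq_zero.mp h0 with h | h
  · linarith [sub_eq_zero.mp h]
  · exfalso
    have h2 : W = (1 - a) / y := by linarith [sub_eq_zero.mp h]
    have h3 : (1 : ℝ) < (1 - a) / y :=
      (one_lt_div hy).mpr (by linarith [alpha_lt' hx hy hxy])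
    have h4 := Wv_lt_one hx hy hxy
    rw [← hW, h2] at h4
    linarith

/-- The main computation: the conditional mass of the level set `{N = n}`. -/
lemma main_sum (n : ℕ) :
    (∑' e : {e : Ev // N e = (n : ℤ)}, ((1 - x - y) * (x ^ Gc e.1 * y ^ Bc e.1)))
      = ((y - alpha x y) / y) * (alpha x y / y) ^ n := by
  have h1 : (∑' e : {e : Ev // N e = (n : ℤ)}, ((1 - x - y) * (x ^ Gc e.1 * y ^ Bc e.1)))
      = (1 - x - y) * Sv x y n := by
    rw [tsum_mul_left]
    rfl
  rw [h1, Sv_pow hx hy hxy, Sv0_eq hx hy hxy, Wv_eq hx hy hxy]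
  have hy0 : y ≠ 0 := hy.ne'
  have hz : 1 - (x + y) ≠ 0 := by intro h; linarith
  have : (1 : ℝ) - x - y = 1 - (x + y) := by ring
  rw [this]
  field_simp

end Alpha

/-- Conditional masses of the sets `E_n = {e : N(e) = n}` and the resulting
posterior `ν(E_n)`. -/
theorem stmt_11 (p q π0 : ℝ) (hq0 : 0 < q) (hqp : q < p) (hp1 : p < 1)
    (hpq0 : 0 < p + q) (hpq1 : p + q < 1) (h0 : 0 < π0) (h1 : π0 < 1) (n : ℕ) :
    (∑' e : {e : Ev // N e = (n : ℤ)}, FG p q e.1)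
        = ((q - alpha p q) / q) * (alpha p q / q) ^ n ∧
    (∑' e : {e : Ev // N e = (n : ℤ)}, FB p q e.1)
        = ((p - alpha p q) / p) * (alpha p q / p) ^ n ∧
    nu p q π0 {e : Ev | N e = (n : ℤ)}
        = 1 / (1 + ((1 - π0) / π0) * ((p - alpha p q) / (q - alpha p q)) * (q / p) ^ (n + 1)) := by
  have hp0 : 0 < p := hq0.trans hqp
  have hqp1 : q + p < 1 := by linarith
  have hpartG : (∑' e : {e : Ev // N e = (n : ℤ)}, FG p q e.1)
      = ((q - alpha p q) / q) * (alpha p q / q) ^ n := by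
    rw [tsum_congr (fun e : {e : Ev // N e = (n : ℤ)} =>
      (show FG p q e.1 = (1 - p - q) * (p ^ Gc e.1 * q ^ Bc e.1) by rw [FG]; ring))]
    exact main_sum hp0 hq0 hpq1 n
  have hpartB : (∑' e : {e : Ev // N e = (n : ℤ)}, FB p q e.1)
      = ((p - alpha p q) / p) * (alpha p q / p) ^ n := by
    rw [tsum_congr (fun e : {e : Ev // N e = (n : ℤ)} =>
      (show FB p q e.1 = (1 - q - p) * (q ^ Gc e.1 * p ^ Bc e.1) by rw [FB]; ring))]
    rw [main_sum hq0 hp0 hqp1 n, alpha_comm]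
  refine ⟨hpartG, hpartB, ?_⟩
  -- the posterior
  have ha_pos : 0 < alpha p q := alpha_pos hp0 hq0 hpq1
  have ha_q : alpha p q < q := alpha_lt hp0 hq0 hpq1
  have ha_p : alpha p q < p := by
    have := alpha_lt hq0 hp0 hqp1
    rwa [(alpha_comm : alpha q p = alpha p q)] at this
  set a : ℝ := ((q - alpha p q) / q) * (alpha p q / q) ^ n with haa
  set b : ℝ := ((p - alpha p q) / p) * (alpha p q / p) ^ n with hbb
  set R : ℝ := ((1 - π0) / π0) * ((p - alpha p q) / (q - alpha p q)) * (q / p) ^ (n + 1)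
    with hR
  have hq0' : q ≠ 0 := hq0.ne'
  have hp0' : p ≠ 0 := hp0.ne'
  have hπ0' : π0 ≠ 0 := h0.ne'
  have hqa : q - alpha p q ≠ 0 := by intro h; linarith
  have hpa : p - alpha p q ≠ 0 := by intro h; linarith
  have hqn : (q : ℝ) ^ n ≠ 0 := pow_ne_zero _ hq0'
  have hpn : (p : ℝ) ^ n ≠ 0 := pow_ne_zero _ hp0'
  have ha_pos' : 0 < a := by
    apply mul_pos (div_pos (by linarith) hq0)
    exact pow_pos (div_pos ha_pos hq0) n
  have hR_pos : 0 < R := by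
    apply mul_pos (mul_pos (div_pos (by linarith) h0) (div_pos (by linarith) (by linarith)))
    exact pow_pos (div_pos hq0 hp0) (n + 1)
  have hkey : b * (1 - π0) = a * π0 * R := by
    rw [haa, hbb, hR]
    simp only [div_pow, pow_succ]
    field_simp
  have hnu : nu p q π0 {e : Ev | N e = (n : ℤ)}
      = (a * π0) / (a * π0 + b * (1 - π0)) := by
    rw [nu]
    have e1 : (∑' e : ↑{e : Ev | N e = (n : ℤ)}, FG p q e.1) = a := hpartG
    have e2 : (∑' e : ↑{e : Ev | N e = (n : ℤ)}, FB p q e.1) = b := hpartB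
    rw [e1, e2]
  rw [hnu, hkey]
  have h3 : a * π0 + a * π0 * R = (a * π0) * (1 + R) := by ring
  rw [h3]
  have h4 : a * π0 ≠ 0 := by positivity
  calc a * π0 / (a * π0 * (1 + R)) = a * π0 * 1 / (a * π0 * (1 + R)) := by rw [mul_one]
    _ = 1 / (1 + R) := mul_div_mul_left 1 (1 + R) h4

end LeftCensored
end
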